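/- arXiv:1302.2832 — 9 statements merged into one kernel-verified Lean document; each statement's English description precedes it below -/
import Mathlib

section
/- Let A be a normed unital algebra with submultiplicative norm (‖ab‖ ≤ ‖a‖·‖b‖ for all a,b ∈ A) and ‖1‖ = 1. Let 0 ≤ S < T < ∞ and C > 0, let S = s₁ < s₂ < … < s_{n+1} = T be real numbers, and let a₁, …, a_n ∈ A satisfy ‖a_i‖ ≤ (s_{i+1} − s_i)·C for all i = 1, …, n. Then ‖∏_{i=1}^{n}(1 + a_i) − 1 − ∑_{i=1}^{n} a_i‖ ≤ (1/2)·(T − S)²·C²·exp(C·(T − S)), where the product is taken in the order of increasing index i. -/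
lemma list_norm_sum {A : Type*} [SeminormedAddCommGroup A] (l : List A) :
    ‖l.sum‖ ≤ (l.map norm).sum := by
  induction l with
  | nil => simp
  | cons x l ih =>
    simp only [List.sum_cons, List.map_cons]
    exact (norm_add_le _ _).trans (by linarith)

lemma prod_one_add_le_exp (l : List ℝ) (h : ∀ x ∈ l, 0 ≤ x) :
    (l.map (fun x => 1 + x)).prod ≤ Real.exp l.sum := by
  induction l with
  | nil => simp
  | cons x l ih =>
    simp only [List.map_cons, List.prod_cons, List.sum_cons, Real.exp_add]
    have hx : 0 ≤ x := h x (by simp)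
    have h1 : (1 : ℝ) + x ≤ Real.exp x := by linarith [Real.add_one_le_exp x]
    have h2 := ih (fun y hy => h y (by simp [hy]))
    have hp : (0:ℝ) ≤ (l.map (fun x => 1 + x)).prod := by
      apply List.prod_nonneg
      intro y hy
      simp only [List.mem_map] at hy
      obtain ⟨z, hz, rfl⟩ := hy
      linarith [h z (by simp [hz])]
    calc (1 + x) * (l.map (fun x => 1 + x)).prod ≤ Real.exp x * Real.exp l.sum := by
          apply mul_le_mul h1 h2 hp (Real.exp_nonneg x)
      _ = _ := rfl

lemma norm_prod_sub_one {A : Type*} [NormedRing A] [NormOneClass A] (l : List A) :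
    ‖(l.map (fun x => 1 + x)).prod - 1‖ ≤ (l.map (fun x => 1 + ‖x‖)).prod - 1 := by
  induction l with
  | nil => simp
  | cons x l ih =>
    simp only [List.map_cons, List.prod_cons]
    have key : (1 + x) * (l.map (fun x => 1 + x)).prod - 1
        = (1 + x) * ((l.map (fun x => 1 + x)).prod - 1) + x := by noncomm_ring
    rw [key]
    have h1 : ‖(1 : A) + x‖ ≤ 1 + ‖x‖ := (norm_add_le _ _).trans (by simp)
    calc ‖(1 + x) * ((l.map (fun x => 1 + x)).prod - 1) + x‖
        ≤ ‖(1 + x) * ((l.map (fun x => 1 + x)).prod - 1)‖ + ‖x‖ := norm_add_le _ _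
      _ ≤ (1 + ‖x‖) * ((l.map (fun x => 1 + ‖x‖)).prod - 1) + ‖x‖ := by
          gcongr
          exact (norm_mul_le _ _).trans (mul_le_mul h1 ih (norm_nonneg _)
            (by positivity))
      _ = (1 + ‖x‖) * (l.map (fun x => 1 + ‖x‖)).prod - 1 := by ring

lemma norm_prod_sub_one_sub_sum {A : Type*} [NormedRing A] [NormOneClass A] (l : List A) :
    ‖(l.map (fun x => 1 + x)).prod - 1 - l.sum‖
      ≤ (l.map (fun x => 1 + ‖x‖)).prod - 1 - (l.map norm).sum := by
  induction l with
  | nil => simp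
  | cons x l ih =>
    simp only [List.map_cons, List.prod_cons, List.sum_cons]
    set P := (l.map (fun x => 1 + x)).prod with hP
    set Q := (l.map (fun x => 1 + ‖x‖)).prod with hQ
    set Sg' := (l.map norm).sum with hSg
    have key : (1 + x) * P - 1 - (x + l.sum)
        = (1 + x) * (P - 1 - l.sum) + x * l.sum := by noncomm_ring
    rw [key]
    have h1 : ‖(1 : A) + x‖ ≤ 1 + ‖x‖ := (norm_add_le _ _).trans (by simp)
    have hsum : ‖l.sum‖ ≤ Sg' := list_norm_sum l
    have hD : (0:ℝ) ≤ ‖P - 1 - l.sum‖ := norm_nonneg _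
    calc ‖(1 + x) * (P - 1 - l.sum) + x * l.sum‖
        ≤ ‖(1 + x) * (P - 1 - l.sum)‖ + ‖x * l.sum‖ := norm_add_le _ _
      _ ≤ (1 + ‖x‖) * (Q - 1 - Sg') + ‖x‖ * Sg' := by
          gcongr
          · exact (norm_mul_le _ _).trans (mul_le_mul h1 ih hD (by positivity))
          · exact (norm_mul_le _ _).trans
              (mul_le_mul_of_nonneg_left hsum (norm_nonneg _))
      _ = (1 + ‖x‖) * Q - 1 - (‖x‖ + Sg') := by ring

lemma exp_taylor_bound {x : ℝ} (hx : 0 ≤ x) :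
    Real.exp x - 1 - x ≤ x ^ 2 / 2 * Real.exp x := by
  set f : ℝ → ℝ := fun t => t ^ 2 / 2 - 1 + Real.exp (-t) + t * Real.exp (-t) with hf
  have hderiv : ∀ t : ℝ, HasDerivAt f (t - t * Real.exp (-t)) t := by
    intro t
    have h2 : HasDerivAt (fun t : ℝ => Real.exp (-t)) (-Real.exp (-t)) t := by
      simpa [Function.comp_def] using (Real.hasDerivAt_exp (-t)).comp t (hasDerivAt_neg t)
    have h1 : HasDerivAt (fun t : ℝ => t ^ 2 / 2) t t := by
      simpa using (hasDerivAt_pow 2 t).div_const 2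
    have h3 : HasDerivAt (fun t : ℝ => t * Real.exp (-t))
        (Real.exp (-t) + t * -Real.exp (-t)) t := by
      simpa [Pi.mul_def] using (hasDerivAt_id t).mul h2
    have := (((h1.sub_const 1).add h2).add h3)
    exact this.congr_deriv (by ring)
  have hmono : MonotoneOn f (Set.Ici 0) := by
    apply monotoneOn_of_deriv_nonneg (convex_Ici 0)
    · exact fun t _ => (hderiv t).continuousAt.continuousWithinAt
    · intro t ht
      exact (hderiv t).differentiableAt.differentiableWithinAt
    · intro t ht
      rw [(hderiv t).deriv]
      simp only [interior_Ici, Set.mem_Ioi] at ht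
      have : Real.exp (-t) ≤ 1 := Real.exp_le_one_iff.mpr (by linarith)
      nlinarith
  have h0 : f 0 = 0 := by simp [hf]
  have := hmono (Set.self_mem_Ici) (Set.mem_Ici.mpr hx) hx
  rw [h0] at this
  have hinv : Real.exp x * Real.exp (-x) = 1 := by
    rw [← Real.exp_add]; simp
  have hfx : 0 ≤ x ^ 2 / 2 - 1 + Real.exp (-x) + x * Real.exp (-x) := this
  nlinarith [Real.exp_pos x, Real.exp_pos (-x)]


/-- main estimate for products of perturbations of the identity in a
normed unital algebra. -/
theorem stmt_0 {A : Type*} [NormedRing A] [NormOneClass A] [NormedAlgebra ℂ A]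
    (S T C : ℝ) (hS : 0 ≤ S) (hST : S < T) (hC : 0 < C)
    (n : ℕ) (s : Fin (n + 1) → ℝ) (hmono : StrictMono s)
    (hs0 : s 0 = S) (hsn : s (Fin.last n) = T)
    (a : Fin n → A)
    (ha : ∀ i : Fin n, ‖a i‖ ≤ (s i.succ - s i.castSucc) * C) :
    ‖(List.ofFn (fun i : Fin n => 1 + a i)).prod - 1 - ∑ i : Fin n, a i‖ ≤
      (1 / 2) * (T - S) ^ 2 * C ^ 2 * Real.exp (C * (T - S)) := by
  set l : List A := List.ofFn a with hl
  have hlist : List.ofFn (fun i : Fin n => 1 + a i) = l.map (fun x => 1 + x) := by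
    rw [hl, List.map_ofFn]; rfl
  have hsum : ∑ i : Fin n, a i = l.sum := (List.sum_ofFn).symm
  set E : ℝ := (l.map norm).sum with hEdef
  have hE0 : 0 ≤ E := by
    apply List.sum_nonneg
    intro x hx
    simp only [List.mem_map] at hx
    obtain ⟨y, _, rfl⟩ := hx
    exact norm_nonneg y
  -- telescoping bound on E
  set g : ℕ → ℝ := fun i => if h : i < n + 1 then s ⟨i, h⟩ else T with hg
  have tel : ∑ i : Fin n, (s i.succ - s i.castSucc) = T - S := by
    have h1 : ∑ i : Fin n, (s i.succ - s i.castSucc)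
        = ∑ i ∈ Finset.range n, (g (i + 1) - g i) := by
      rw [Finset.sum_range fun i => g (i + 1) - g i]
      apply Finset.sum_congr rfl
      intro i _
      have hi1 : (i : ℕ) + 1 < n + 1 := Nat.succ_lt_succ i.isLt
      have hi2 : (i : ℕ) < n + 1 := Nat.lt_succ_of_lt i.isLt
      rw [hg]
      simp only [dif_pos hi1, dif_pos hi2]
      rfl
    rw [h1, Finset.sum_range_sub g]
    have hn : g n = T := by
      rw [hg]; simp only [dif_pos (Nat.lt_succ_self n)]
      rw [← hsn]; rfl
    have h0 : g 0 = S := by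
      rw [hg]; simp only [dif_pos (Nat.succ_pos n)]
      rw [← hs0]; rfl
    rw [hn, h0]
  have hE : E ≤ C * (T - S) := by
    have h1 : E = ∑ i : Fin n, ‖a i‖ := by
      rw [hEdef, hl, List.map_ofFn, List.sum_ofFn]; rfl
    rw [h1]
    calc ∑ i : Fin n, ‖a i‖ ≤ ∑ i : Fin n, (s i.succ - s i.castSucc) * C :=
          Finset.sum_le_sum fun i _ => ha i
      _ = (∑ i : Fin n, (s i.succ - s i.castSucc)) * C := by
          rw [Finset.sum_mul]
      _ = C * (T - S) := by rw [tel]; ring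
  have hQ : (l.map (fun x => 1 + ‖x‖)).prod ≤ Real.exp E := by
    have h := prod_one_add_le_exp (l.map norm) (by
      intro x hx
      simp only [List.mem_map] at hx
      obtain ⟨y, _, rfl⟩ := hx
      exact norm_nonneg y)
    simpa [List.map_map, Function.comp_def] using h
  rw [hlist, hsum]
  calc ‖(l.map (fun x => 1 + x)).prod - 1 - l.sum‖
      ≤ (l.map (fun x => 1 + ‖x‖)).prod - 1 - E := norm_prod_sub_one_sub_sum l
    _ ≤ Real.exp E - 1 - E := by linarith
    _ ≤ E ^ 2 / 2 * Real.exp E := exp_taylor_bound hE0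
    _ ≤ (C * (T - S)) ^ 2 / 2 * Real.exp (C * (T - S)) := by gcongr
    _ = (1 / 2) * (T - S) ^ 2 * C ^ 2 * Real.exp (C * (T - S)) := by ring
end

section
/- Let x₁, …, x_n be nonnegative real numbers and set Z := ∑_{i=1}^{n} x_i. Then ∏_{i=1}^{n}(1 + x_i) − 1 − Z ≤ (Z²/2)·exp(Z). In particular ∏_{i=1}^{n}(1 + x_i) ≤ exp(Z). -/
lemma aux_mono (z : ℝ) (hz : 0 ≤ z) :
    1 ≤ z ^ 2 / 2 + (1 + z) * Real.exp (-z) := by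
  set f : ℝ → ℝ := fun z => z ^ 2 / 2 + (1 + z) * Real.exp (-z) with hf
  have hderiv : ∀ t : ℝ, HasDerivAt f (t - t * Real.exp (-t)) t := by
    intro t
    have h1 : HasDerivAt (fun s : ℝ => s ^ 2 / 2) t t := by
      simpa using ((hasDerivAt_pow 2 t).div_const 2)
    have h2 : HasDerivAt (fun s : ℝ => Real.exp (-s)) (-Real.exp (-t)) t := by
      simpa using ((hasDerivAt_id t).neg.exp)
    have h3 : HasDerivAt (fun s : ℝ => (1 + s) * Real.exp (-s))
        (1 * Real.exp (-t) + (1 + t) * (-Real.exp (-t))) t :=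
      (((hasDerivAt_id t).const_add 1).mul h2)
    have := h1.add h3
    exact this.congr_deriv (by ring)
  have hmono : MonotoneOn f (Set.Ici (0:ℝ)) := by
    apply monotoneOn_of_deriv_nonneg (convex_Ici 0)
    · exact (Continuous.continuousOn (by continuity))
    · intro t ht
      exact (hderiv t).differentiableAt.differentiableWithinAt
    · intro t ht
      rw [(hderiv t).deriv]
      have ht' : 0 < t := by simpa using ht
      have : Real.exp (-t) ≤ 1 := Real.exp_le_one_iff.mpr (by linarith)
      nlinarith
  have h0 : f 0 = 1 := by simp [hf]
  have := hmono (Set.self_mem_Ici) (Set.mem_Ici.mpr hz) hz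
  rw [h0] at this
  exact this

lemma aux_exp (z : ℝ) (hz : 0 ≤ z) :
    Real.exp z - 1 - z ≤ z ^ 2 / 2 * Real.exp z := by
  have h := aux_mono z hz
  have hpos := Real.exp_pos z
  have := mul_le_mul_of_nonneg_left h hpos.le
  have hE : Real.exp z * Real.exp (-z) = 1 := by
    rw [← Real.exp_add]; simp
  nlinarith [Real.exp_pos z]

/-- for nonnegative reals `xᵢ` with sum `Z`, one has
`∏ (1 + xᵢ) - 1 - Z ≤ (Z²/2)·exp Z`, and in particular `∏ (1 + xᵢ) ≤ exp Z`. -/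
theorem stmt_3 (n : ℕ) (x : Fin n → ℝ) (hx : ∀ i, 0 ≤ x i) :
    (∏ i : Fin n, (1 + x i)) - 1 - (∑ i : Fin n, x i) ≤
        ((∑ i : Fin n, x i) ^ 2 / 2) * Real.exp (∑ i : Fin n, x i) ∧
      (∏ i : Fin n, (1 + x i)) ≤ Real.exp (∑ i : Fin n, x i) := by
  have hZ : 0 ≤ ∑ i : Fin n, x i := Finset.sum_nonneg fun i _ => hx i
  have hprod : (∏ i : Fin n, (1 + x i)) ≤ Real.exp (∑ i : Fin n, x i) := by
    rw [Real.exp_sum]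
    apply Finset.prod_le_prod
    · intro i _; linarith [hx i]
    · intro i _
      have := Real.add_one_le_exp (x i)
      linarith
  refine ⟨?_, hprod⟩
  have := aux_exp (∑ i : Fin n, x i) hZ
  linarith
end

section
/- Let A be a normed unital algebra with submultiplicative norm and ‖1‖ = 1, let 0 ≤ R < S and C > 0, and let (a_{r,s})_{R ≤ r ≤ s ≤ S} be a family of elements of A such that ‖a_{r,s}‖ ≤ (s − r)·C for all R ≤ r ≤ s ≤ S, and a_{r,t} = a_{r,s} + a_{s,t} whenever R ≤ r < s < t ≤ S. Set g_{r,s} := 1 + a_{r,s} and, for a partition α = {R = t₁ < t₂ < … < t_{n+1} = S} of [R,S], set Θ_α := g_{t₁,t₂}·g_{t₂,t₃}·⋯·g_{t_n,t_{n+1}}. Then the net (Θ_α)_{α ∈ P[R,S]}, indexed by the partitions of [R,S] partially ordered by inclusion, is a Cauchy net: for every ε > 0 there exists a partition γ of [R,S] such that for all partitions α, β of [R,S] with γ ⊆ α and γ ⊆ β one has ‖Θ_α − Θ_β‖ < ε. -/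
/-- A partition of the interval `[R, S]`: a finite set of reals containing `R` and `S`
all of whose elements lie in `[R, S]`. -/
def IsPartition (R S : ℝ) (α : Finset ℝ) : Prop :=
  R ∈ α ∧ S ∈ α ∧ ∀ t ∈ α, R ≤ t ∧ t ≤ S

/-- The list of consecutive pairs `(t₁,t₂), (t₂,t₃), …` of the elements of a finite set
of reals, sorted increasingly. -/
noncomputable def consecPairs (α : Finset ℝ) : List (ℝ × ℝ) :=
  (α.sort (· ≤ ·)).zip (α.sort (· ≤ ·)).tail

/-- The ordered product `g t₁ t₂ * g t₂ t₃ * ⋯ * g tₙ tₙ₊₁` over the consecutive points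
`t₁ < t₂ < … < tₙ₊₁` of a partition, taken in increasing order. -/
noncomputable def partitionProd {A : Type*} [Ring A] (g : ℝ → ℝ → A) (α : Finset ℝ) : A :=
  ((consecPairs α).map fun p => g p.1 p.2).prod

/-- The sum `U t₁ t₂ + U t₂ t₃ + ⋯ + U tₙ tₙ₊₁` over the consecutive points of a
partition. -/
noncomputable def partitionSum {A : Type*} [Ring A] (U : ℝ → ℝ → A) (α : Finset ℝ) : A :=
  ((consecPairs α).map fun p => U p.1 p.2).sum

/-- The mesh `max_i (t_{i+1} - t_i)` of a partition. -/
noncomputable def mesh (α : Finset ℝ) : ℝ :=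
  ((consecPairs α).map fun p => p.2 - p.1).foldr max 0

/-- `IsNetLimit g r s u` means that the net `α ↦ partitionProd g α`, indexed by the
partitions of `[r, s]` partially ordered by inclusion, converges to `u`. -/
def IsNetLimit {A : Type*} [NormedRing A] (g : ℝ → ℝ → A) (r s : ℝ) (u : A) : Prop :=
  ∀ ε > 0, ∃ γ : Finset ℝ, IsPartition r s γ ∧
    ∀ α : Finset ℝ, IsPartition r s α → γ ⊆ α → ‖partitionProd g α - u‖ < ε

/-! Auxiliary list machinery -/

def pairList : List ℝ → List (ℝ × ℝ)
  | x :: y :: l => (x, y) :: pairList (y :: l)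
  | _ => []

theorem zip_tail_eq_pairList : ∀ l : List ℝ, l.zip l.tail = pairList l
  | [] => rfl
  | [_] => rfl
  | x :: y :: l => by
      simpa [pairList] using zip_tail_eq_pairList (y :: l)

theorem consecPairs_eq (α : Finset ℝ) : consecPairs α = pairList (α.sort (· ≤ ·)) :=
  zip_tail_eq_pairList _

theorem pairList_append_cons : ∀ (m : List ℝ) (x : ℝ) (l : List ℝ),
    pairList (m ++ x :: l) = pairList (m ++ [x]) ++ pairList (x :: l)
  | [], x, l => by simp [pairList]
  | [y], x, l => by simp [pairList]
  | y :: z :: m, x, l => by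
      have := pairList_append_cons (z :: m) x l
      simp only [List.cons_append, pairList] at *
      simp [this]

theorem pairList_mem : ∀ (l : List ℝ), l.Pairwise (· ≤ ·) →
    ∀ p ∈ pairList l, p.1 ∈ l ∧ p.2 ∈ l ∧ p.1 ≤ p.2
  | [], _, p, hp => by simp [pairList] at hp
  | [_], _, p, hp => by simp [pairList] at hp
  | x :: y :: l, hs, p, hp => by
      rcases List.mem_cons.1 hp with h | h
      · subst h
        exact ⟨List.mem_cons_self, by simp, (List.pairwise_cons.1 hs).1 y (by simp)⟩
      · have := pairList_mem (y :: l) (List.pairwise_cons.1 hs).2 p h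
        exact ⟨List.mem_cons_of_mem _ this.1, List.mem_cons_of_mem _ this.2.1, this.2.2⟩

/-- sum of gaps is at most `S - x` for a sorted list headed by `x` with entries `≤ S`. -/
theorem sumGaps_le (S : ℝ) : ∀ (l : List ℝ) (x : ℝ), (x :: l).Pairwise (· ≤ ·) →
    (∀ y ∈ x :: l, y ≤ S) →
    ((pairList (x :: l)).map fun p => p.2 - p.1).sum ≤ S - x
  | [], x, _, hb => by
      simp [pairList]
      linarith [hb x (by simp)]
  | y :: l, x, hs, hb => by
      have ih := sumGaps_le S l y (List.pairwise_cons.1 hs).2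
        (fun z hz => hb z (List.mem_cons_of_mem _ hz))
      simp only [pairList, List.map_cons, List.sum_cons] at *
      linarith

/-- Splitting lemma: find the adjacent pair around `t`. -/
theorem split_around : ∀ (l : List ℝ), l.Pairwise (· ≤ ·) → ∀ t : ℝ, t ∉ l →
    (∃ u ∈ l, u < t) → (∃ v ∈ l, t < v) →
    ∃ (l₁ : List ℝ) (r s : ℝ) (l₂ : List ℝ), l = l₁ ++ r :: s :: l₂ ∧ r < t ∧ t < s
  | [], _, t, _, ⟨u, hu, _⟩, _ => absurd hu List.not_mem_nil
  | [x], _, t, _, ⟨u, hu, hu'⟩, ⟨v, hv, hv'⟩ => by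
      simp at hu hv; subst hu; subst hv; linarith
  | x :: y :: l, hs, t, ht, ⟨u, hu, hu'⟩, ⟨v, hv, hv'⟩ => by
      have hxu : x ≤ u := by
        rcases List.mem_cons.1 hu with h | h
        · exact h.symm.le
        · exact (List.pairwise_cons.1 hs).1 u h
      have hxt : x < t := lt_of_le_of_lt hxu hu'
      by_cases hty : t < y
      · exact ⟨[], x, y, l, rfl, hxt, hty⟩
      · have hyt : y < t := by
          rcases lt_or_eq_of_le (not_lt.1 hty) with h | h
          · exact h
          · exact absurd (h ▸ List.mem_cons_of_mem x ((List.mem_cons_self (a := y) (l := l)))) ht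
        have hvyl : v ∈ y :: l := by
          rcases List.mem_cons.1 hv with h | h
          · exact absurd (h ▸ hv') (by exact not_lt.2 hxt.le)
          · exact h
        obtain ⟨l₁, r, s, l₂, heq, hr, hsgt⟩ :=
          split_around (y :: l) (List.pairwise_cons.1 hs).2 t
            (fun h => ht (List.mem_cons_of_mem _ h)) ⟨y, List.mem_cons_self, hyt⟩
            ⟨v, hvyl, hv'⟩
        exact ⟨x :: l₁, r, s, l₂, by simp [heq], hr, hsgt⟩


theorem sort_insert (δ : Finset ℝ) (t : ℝ) (ht : t ∉ δ) (l₁ l₂ : List ℝ) (r s : ℝ)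
    (heq : δ.sort (· ≤ ·) = l₁ ++ r :: s :: l₂) (hrt : r < t) (hts : t < s) :
    (insert t δ).sort (· ≤ ·) = l₁ ++ r :: t :: s :: l₂ := by
  have hperm : ((insert t δ).sort (· ≤ ·)).Perm (l₁ ++ r :: t :: s :: l₂) := by
    have p1 : ((insert t δ).sort (· ≤ ·)).Perm (t :: δ.sort (· ≤ ·)) :=
      ((Finset.sort_perm_toList _ _).trans (Finset.toList_insert ht)).trans
        (List.Perm.cons t (Finset.sort_perm_toList _ _).symm)
    rw [heq] at p1
    refine p1.trans ?_
    refine List.Perm.trans (l₂ := l₁ ++ t :: r :: s :: l₂) List.perm_middle.symm ?_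
    exact List.Perm.append_left l₁ (List.Perm.swap r t _)
  refine List.Perm.eq_of_pairwise' (Finset.pairwise_sort _ _) ?_ hperm
  have hsort : List.Pairwise (· ≤ ·) (l₁ ++ r :: s :: l₂) := heq ▸ Finset.pairwise_sort _ _
  rw [List.pairwise_append] at hsort ⊢
  obtain ⟨h1, h2, h3⟩ := hsort
  refine ⟨h1, ?_, ?_⟩
  · rw [List.pairwise_cons] at h2
    obtain ⟨hr, h2⟩ := h2
    rw [List.pairwise_cons] at h2
    obtain ⟨hshyp, h2⟩ := h2
    refine List.pairwise_cons.2 ⟨?_, List.pairwise_cons.2 ⟨?_, List.pairwise_cons.2 ⟨hshyp, h2⟩⟩⟩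
    · intro b hb
      rcases List.mem_cons.1 hb with h | h
      · exact h ▸ hrt.le
      · exact hr b h
    · intro b hb
      rcases List.mem_cons.1 hb with h | h
      · exact h ▸ hts.le
      · exact le_trans hts.le (hshyp b h)
  · intro x hx y hy
    rcases List.mem_cons.1 hy with h | h
    · exact h ▸ (h3 x hx r (by simp))
    rcases List.mem_cons.1 h with h | h
    · exact h ▸ le_trans (h3 x hx r (by simp)) hrt.le
    · exact h3 x hx y (by simp [h])

section Main

variable {A : Type*} [NormedRing A] [NormOneClass A]
variable (R S C : ℝ) (a : ℝ → ℝ → A)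

/-- the sum of squared gaps of a partition -/
noncomputable def sqSum (α : Finset ℝ) : ℝ :=
  ((consecPairs α).map fun p => (p.2 - p.1) ^ 2).sum

theorem sqSum_nonneg (α : Finset ℝ) : 0 ≤ sqSum α := by
  apply List.sum_nonneg
  intro x hx
  obtain ⟨p, _, rfl⟩ := List.mem_map.1 hx
  positivity

/-- norm bound on products over pair lists -/
theorem prod_norm_le (hC : 0 < C) (hRS : R ≤ S)
    (ha_norm : ∀ r s, R ≤ r → r ≤ s → s ≤ S → ‖a r s‖ ≤ (s - r) * C)
    (m : List ℝ) (hs : m.Pairwise (· ≤ ·)) (hb : ∀ x ∈ m, R ≤ x ∧ x ≤ S) :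
    ‖((pairList m).map fun p => 1 + a p.1 p.2).prod‖ ≤ Real.exp (C * (S - R)) := by
  have key : ∀ ps : List (ℝ × ℝ), (∀ p ∈ ps, ‖(1 : A) + a p.1 p.2‖ ≤ Real.exp (C * (p.2 - p.1))) →
      ‖(ps.map fun p => 1 + a p.1 p.2).prod‖ ≤ Real.exp (C * (ps.map fun p => p.2 - p.1).sum) := by
    intro ps
    induction ps with
    | nil => simp
    | cons p ps ih =>
      intro h
      simp only [List.map_cons, List.prod_cons, List.sum_cons]
      calc ‖(1 + a p.1 p.2) * (ps.map fun p => 1 + a p.1 p.2).prod‖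
          ≤ ‖(1 : A) + a p.1 p.2‖ * ‖(ps.map fun p => 1 + a p.1 p.2).prod‖ := norm_mul_le _ _
        _ ≤ Real.exp (C * (p.2 - p.1)) * Real.exp (C * (ps.map fun p => p.2 - p.1).sum) := by
            apply mul_le_mul (h p (by simp)) (ih fun q hq => h q (List.mem_cons_of_mem _ hq))
              (norm_nonneg _) (Real.exp_nonneg _)
        _ = Real.exp (C * (p.2 - p.1 + (ps.map fun p => p.2 - p.1).sum)) := by
            rw [← Real.exp_add]; congr 1; ring
  have hps : ∀ p ∈ pairList m, ‖(1 : A) + a p.1 p.2‖ ≤ Real.exp (C * (p.2 - p.1)) := by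
    intro p hp
    obtain ⟨h1, h2, h12⟩ := pairList_mem m hs p hp
    calc ‖(1 : A) + a p.1 p.2‖ ≤ ‖(1 : A)‖ + ‖a p.1 p.2‖ := norm_add_le _ _
      _ ≤ 1 + (p.2 - p.1) * C := by
          have := ha_norm p.1 p.2 (hb _ h1).1 h12 (hb _ h2).2
          simp [norm_one]; linarith
      _ ≤ Real.exp (C * (p.2 - p.1)) := by
          have := Real.add_one_le_exp (C * (p.2 - p.1))
          linarith [this]
  have hsum : ((pairList m).map fun p => p.2 - p.1).sum ≤ S - R := by
    match m with
    | [] => simp [pairList]; linarith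
    | x :: l =>
      have := sumGaps_le S l x hs (fun y hy => (hb y hy).2)
      have hx : R ≤ x := (hb x (by simp)).1
      linarith
  calc ‖((pairList m).map fun p => 1 + a p.1 p.2).prod‖
      ≤ Real.exp (C * ((pairList m).map fun p => p.2 - p.1).sum) := key _ hps
    _ ≤ Real.exp (C * (S - R)) := by
        apply Real.exp_le_exp.2
        exact mul_le_mul_of_nonneg_left hsum hC.le


theorem insert_estimate (hC : 0 < C) (hRS : R < S)
    (ha_norm : ∀ r s, R ≤ r → r ≤ s → s ≤ S → ‖a r s‖ ≤ (s - r) * C)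
    (ha_add : ∀ r s t, R ≤ r → r < s → s < t → t ≤ S → a r t = a r s + a s t)
    (δ : Finset ℝ) (hδ : IsPartition R S δ) (t : ℝ) (htδ : t ∉ δ) (htR : R < t) (htS : t < S) :
    ‖partitionProd (fun r s => 1 + a r s) (insert t δ) -
        partitionProd (fun r s => 1 + a r s) δ‖ ≤
      Real.exp (C * (S - R)) ^ 2 * C ^ 2 / 2 * (sqSum δ - sqSum (insert t δ)) ∧
    sqSum (insert t δ) ≤ sqSum δ := by
  obtain ⟨hRδ, hSδ, hbδ⟩ := hδ
  set l := δ.sort (· ≤ ·) with hl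
  have hsl : l.Pairwise (· ≤ ·) := Finset.pairwise_sort _ _
  have hmem : ∀ x, x ∈ l ↔ x ∈ δ := fun x => Finset.mem_sort _
  obtain ⟨l₁, r, s, l₂, heq, hrt, hts⟩ :=
    split_around l hsl t (fun h => htδ ((hmem t).1 h))
      ⟨R, (hmem R).2 hRδ, htR⟩ ⟨S, (hmem S).2 hSδ, htS⟩
  have heq' : l = (l₁ ++ [r]) ++ s :: l₂ := by simp [heq]
  have hins : (insert t δ).sort (· ≤ ·) = l₁ ++ r :: t :: s :: l₂ :=
    sort_insert δ t htδ l₁ l₂ r s heq hrt hts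
  -- bounds and memberships
  have hmemδ : ∀ x ∈ l, R ≤ x ∧ x ≤ S := fun x hx => hbδ x ((hmem x).1 hx)
  have hrδ : r ∈ l := by rw [heq]; simp
  have hsδ : s ∈ l := by rw [heq]; simp
  have hrB := hmemδ r hrδ
  have hsB := hmemδ s hsδ
  -- sorted sublists
  have hsplit := hsl
  rw [heq', List.pairwise_append] at hsplit
  obtain ⟨hP1, hQ1, _⟩ := hsplit
  have hPmem : ∀ x ∈ l₁ ++ [r], R ≤ x ∧ x ≤ S := fun x hx =>
    hmemδ x (by rw [heq']; exact List.mem_append_left _ hx)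
  have hQmem : ∀ x ∈ s :: l₂, R ≤ x ∧ x ≤ S := fun x hx =>
    hmemδ x (by rw [heq']; exact List.mem_append_right _ hx)
  -- pair list decompositions
  have cδ : consecPairs δ = pairList (l₁ ++ [r]) ++ (r, s) :: pairList (s :: l₂) := by
    rw [consecPairs_eq, ← hl, heq, pairList_append_cons]
    rfl
  have c' : consecPairs (insert t δ) =
      pairList (l₁ ++ [r]) ++ (r, t) :: (t, s) :: pairList (s :: l₂) := by
    rw [consecPairs_eq, hins, pairList_append_cons]
    rfl
  set g : ℝ → ℝ → A := fun r s => 1 + a r s with hg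
  set P : A := ((pairList (l₁ ++ [r])).map fun p => g p.1 p.2).prod with hPdef
  set Q : A := ((pairList (s :: l₂)).map fun p => g p.1 p.2).prod with hQdef
  have hΘδ : partitionProd g δ = P * (g r s * Q) := by
    rw [partitionProd, cδ, List.map_append, List.prod_append, List.map_cons, List.prod_cons]
  have hΘ' : partitionProd g (insert t δ) = P * (g r t * (g t s * Q)) := by
    rw [partitionProd, c', List.map_append, List.prod_append, List.map_cons, List.prod_cons,
      List.map_cons, List.prod_cons]
  have hadd : a r s = a r t + a t s := ha_add r t s hrB.1 hrt hts hsB.2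
  have hdiff : partitionProd g (insert t δ) - partitionProd g δ = P * (a r t * a t s * Q) := by
    rw [hΘδ, hΘ', hg]
    simp only
    rw [hadd]
    noncomm_ring
  set E : ℝ := Real.exp (C * (S - R)) with hE
  have hPle : ‖P‖ ≤ E := prod_norm_le R S C a hC hRS.le ha_norm (l₁ ++ [r]) hP1 hPmem
  have hQle : ‖Q‖ ≤ E := prod_norm_le R S C a hC hRS.le ha_norm (s :: l₂) hQ1 hQmem
  have hart : ‖a r t‖ ≤ (t - r) * C := ha_norm r t hrB.1 hrt.le (le_trans hts.le hsB.2)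
  have hats : ‖a t s‖ ≤ (s - t) * C := ha_norm t s (le_trans hrB.1 hrt.le) hts.le hsB.2
  have hE1 : (1 : ℝ) ≤ E := by
    rw [hE]
    calc (1:ℝ) = Real.exp 0 := (Real.exp_zero).symm
      _ ≤ _ := Real.exp_le_exp.2 (by nlinarith)
  have hEpos : 0 ≤ E := le_trans zero_le_one hE1
  have htr : (0:ℝ) ≤ t - r := by linarith
  have hst : (0:ℝ) ≤ s - t := by linarith
  -- sqSum difference
  have hsq : sqSum δ - sqSum (insert t δ) = 2 * ((t - r) * (s - t)) := by
    rw [sqSum, sqSum, cδ, c']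
    simp only [List.map_append, List.sum_append, List.map_cons, List.sum_cons]
    ring
  constructor
  · rw [hdiff, hsq]
    have h1 : ‖P * (a r t * a t s * Q)‖ ≤ ‖P‖ * (‖a r t‖ * ‖a t s‖ * ‖Q‖) := by
      calc ‖P * (a r t * a t s * Q)‖ ≤ ‖P‖ * ‖a r t * a t s * Q‖ := norm_mul_le _ _
        _ ≤ ‖P‖ * (‖a r t * a t s‖ * ‖Q‖) := by
            apply mul_le_mul_of_nonneg_left (norm_mul_le _ _) (norm_nonneg _)
        _ ≤ ‖P‖ * (‖a r t‖ * ‖a t s‖ * ‖Q‖) := by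
            apply mul_le_mul_of_nonneg_left _ (norm_nonneg _)
            apply mul_le_mul_of_nonneg_right (norm_mul_le _ _) (norm_nonneg _)
    have h2 : ‖P‖ * (‖a r t‖ * ‖a t s‖ * ‖Q‖) ≤ E * ((t - r) * C * ((s - t) * C) * E) := by
      apply mul_le_mul hPle _ (by positivity) hEpos
      apply mul_le_mul _ hQle (norm_nonneg _) (by positivity)
      exact mul_le_mul hart hats (norm_nonneg _) (by positivity)
    calc ‖P * (a r t * a t s * Q)‖ ≤ E * ((t - r) * C * ((s - t) * C) * E) := le_trans h1 h2
      _ = E ^ 2 * C ^ 2 / 2 * (2 * ((t - r) * (s - t))) := by ring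
  · nlinarith [hsq]

theorem refine_estimate (hC : 0 < C) (hRS : R < S)
    (ha_norm : ∀ r s, R ≤ r → r ≤ s → s ≤ S → ‖a r s‖ ≤ (s - r) * C)
    (ha_add : ∀ r s t, R ≤ r → r < s → s < t → t ≤ S → a r t = a r s + a s t) :
    ∀ (n : ℕ) (δ α : Finset ℝ), (α \ δ).card = n → IsPartition R S δ → IsPartition R S α →
      δ ⊆ α →
      ‖partitionProd (fun r s => 1 + a r s) α - partitionProd (fun r s => 1 + a r s) δ‖ ≤
        Real.exp (C * (S - R)) ^ 2 * C ^ 2 / 2 * (sqSum δ - sqSum α) ∧ sqSum α ≤ sqSum δ := by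
  intro n
  induction n with
  | zero =>
    intro δ α hcard hδ hα hsub
    have : α = δ := Finset.Subset.antisymm
      (Finset.sdiff_eq_empty_iff_subset.1 (Finset.card_eq_zero.1 hcard)) hsub
    subst this
    simp
  | succ n ih =>
    intro δ α hcard hδ hα hsub
    have hne : (α \ δ).Nonempty := Finset.card_pos.1 (by omega)
    obtain ⟨t, ht⟩ := hne
    have htα : t ∈ α := (Finset.mem_sdiff.1 ht).1
    have htδ : t ∉ δ := (Finset.mem_sdiff.1 ht).2
    have htB := hα.2.2 t htα
    have htR : R < t := lt_of_le_of_ne htB.1 (fun h => htδ (h ▸ hδ.1))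
    have htS : t < S := lt_of_le_of_ne htB.2 (fun h => htδ (h ▸ hδ.2.1))
    set δ' := insert t δ with hδ'def
    have hδ' : IsPartition R S δ' := by
      refine ⟨Finset.mem_insert_of_mem hδ.1, Finset.mem_insert_of_mem hδ.2.1, ?_⟩
      intro x hx
      rcases Finset.mem_insert.1 hx with h | h
      · exact h ▸ htB
      · exact hδ.2.2 x h
    have hsub' : δ' ⊆ α := Finset.insert_subset htα hsub
    have hcard' : (α \ δ').card = n := by
      rw [hδ'def, Finset.sdiff_insert, Finset.card_erase_of_mem ht, hcard]
      omega
    obtain ⟨ih1, ih2⟩ := ih δ' α hcard' hδ' hα hsub'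
    obtain ⟨e1, e2⟩ := insert_estimate R S C a hC hRS ha_norm ha_add δ hδ t htδ htR htS
    rw [← hδ'def] at e1 e2
    constructor
    · calc ‖partitionProd (fun r s => 1 + a r s) α - partitionProd (fun r s => 1 + a r s) δ‖
          ≤ ‖partitionProd (fun r s => 1 + a r s) α - partitionProd (fun r s => 1 + a r s) δ'‖ +
            ‖partitionProd (fun r s => 1 + a r s) δ' - partitionProd (fun r s => 1 + a r s) δ‖ :=
            norm_sub_le_norm_sub_add_norm_sub _ _ _
        _ ≤ Real.exp (C * (S - R)) ^ 2 * C ^ 2 / 2 * (sqSum δ' - sqSum α) +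
            Real.exp (C * (S - R)) ^ 2 * C ^ 2 / 2 * (sqSum δ - sqSum δ') := add_le_add ih1 e1
        _ = Real.exp (C * (S - R)) ^ 2 * C ^ 2 / 2 * (sqSum δ - sqSum α) := by ring
    · linarith

theorem sq_pairList_map : ∀ (n : ℕ) (f : ℕ → ℝ),
    ((pairList ((List.range (n + 1)).map f)).map fun p => (p.2 - p.1) ^ 2).sum =
      ∑ i ∈ Finset.range n, (f (i + 1) - f i) ^ 2
  | 0, f => by simp [pairList]
  | n + 1, f => by
    have h1 : (List.range (n + 2)).map f = f 0 :: (List.range (n + 1)).map (f ∘ Nat.succ) := by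
      rw [List.range_succ_eq_map]
      simp [Function.comp]
    have h2 : (List.range (n + 1)).map (f ∘ Nat.succ) =
        f 1 :: (List.range n).map (f ∘ Nat.succ ∘ Nat.succ) := by
      rw [List.range_succ_eq_map]
      simp [Function.comp]
    rw [h1, h2, pairList]
    rw [← h2]
    simp only [List.map_cons, List.sum_cons]
    rw [sq_pairList_map n (f ∘ Nat.succ)]
    rw [Finset.sum_range_succ' (fun i => (f (i + 1) - f i) ^ 2) n]
    simp [Function.comp]
    ring

end Main


/-- the net of ordered products `Θ_α` over partitions of `[R, S]`
is a Cauchy net. -/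
theorem stmt_5 {A : Type*} [NormedRing A] [NormOneClass A] [NormedAlgebra ℂ A]
    (R S C : ℝ) (hR : 0 ≤ R) (hRS : R < S) (hC : 0 < C)
    (a : ℝ → ℝ → A)
    (ha_norm : ∀ r s, R ≤ r → r ≤ s → s ≤ S → ‖a r s‖ ≤ (s - r) * C)
    (ha_add : ∀ r s t, R ≤ r → r < s → s < t → t ≤ S → a r t = a r s + a s t) :
    ∀ ε > 0, ∃ γ : Finset ℝ, IsPartition R S γ ∧
      ∀ α β : Finset ℝ, IsPartition R S α → IsPartition R S β → γ ⊆ α → γ ⊆ β →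
        ‖partitionProd (fun r s => 1 + a r s) α -
            partitionProd (fun r s => 1 + a r s) β‖ < ε := by
  intro ε hε
  set K : ℝ := Real.exp (C * (S - R)) ^ 2 * C ^ 2 / 2 with hK
  have hKpos : 0 < K := by rw [hK]; positivity
  obtain ⟨n, hn⟩ := exists_nat_gt (max 1 (2 * K * (S - R) ^ 2 / ε))
  have hn1 : (1 : ℝ) ≤ n := le_of_lt (lt_of_le_of_lt (le_max_left _ _) hn)
  have hnpos : (0 : ℝ) < n := lt_of_lt_of_le zero_lt_one hn1
  have hn2 : 2 * K * (S - R) ^ 2 / ε < n := lt_of_le_of_lt (le_max_right _ _) hn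
  set h : ℝ := (S - R) / n with hh
  have hhpos : 0 < h := by rw [hh]; exact div_pos (by linarith) hnpos
  set f : ℕ → ℝ := fun i => R + i * h with hf
  set L : List ℝ := (List.range (n + 1)).map f with hL
  have hfmono : StrictMono f := by
    intro i j hij
    simp only [hf]
    have : (i : ℝ) < j := Nat.cast_lt.2 hij
    nlinarith
  have hLnodup : L.Nodup := List.Nodup.map hfmono.injective List.nodup_range
  have hLsorted : L.Pairwise (· ≤ ·) := by
    rw [hL, List.pairwise_map]
    exact List.Pairwise.imp (fun hij => (hfmono hij).le) List.pairwise_lt_range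
  set γ : Finset ℝ := L.toFinset with hγ
  have hsortγ : γ.sort (· ≤ ·) = L := (List.toFinset_sort _ hLnodup).2 hLsorted
  have hfn : f n = S := by
    simp only [hf, hh]
    field_simp
    ring
  have hmemL : ∀ x ∈ L, ∃ i ≤ n, x = f i := by
    intro x hx
    rw [hL] at hx
    obtain ⟨i, hi, rfl⟩ := List.mem_map.1 hx
    exact ⟨i, Nat.lt_succ_iff.1 (List.mem_range.1 hi), rfl⟩
  have hγpart : IsPartition R S γ := by
    refine ⟨?_, ?_, ?_⟩
    · rw [hγ, List.mem_toFinset, hL]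
      exact List.mem_map.2 ⟨0, by simp, by simp [hf]⟩
    · rw [hγ, List.mem_toFinset, hL]
      exact List.mem_map.2 ⟨n, by simp, hfn⟩
    · intro x hx
      rw [hγ, List.mem_toFinset] at hx
      obtain ⟨i, hi, rfl⟩ := hmemL x hx
      constructor
      · simp only [hf]
        nlinarith [mul_nonneg (Nat.cast_nonneg (α := ℝ) i) hhpos.le]
      · rw [← hfn]
        rcases Nat.lt_or_ge i n with hlt | hge
        · exact (hfmono hlt).le
        · have : i = n := le_antisymm hi hge
          exact this ▸ le_refl _
  have hsqγ : sqSum γ = (S - R) ^ 2 / n := by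
    rw [sqSum, consecPairs_eq, hsortγ, hL, sq_pairList_map n f]
    have : ∀ i, f (i + 1) - f i = h := by
      intro i; simp only [hf]; push_cast; ring
    simp only [this]
    rw [Finset.sum_const, Finset.card_range, nsmul_eq_mul, hh]
    field_simp
  refine ⟨γ, hγpart, ?_⟩
  intro α β hα hβ hγα hγβ
  obtain ⟨eα, nα⟩ := refine_estimate R S C a hC hRS ha_norm ha_add (α \ γ).card γ α rfl
    hγpart hα hγα
  obtain ⟨eβ, nβ⟩ := refine_estimate R S C a hC hRS ha_norm ha_add (β \ γ).card γ β rfl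
    hγpart hβ hγβ
  have hαnn := sqSum_nonneg α
  have hβnn := sqSum_nonneg β
  have key : ‖partitionProd (fun r s => 1 + a r s) α - partitionProd (fun r s => 1 + a r s) β‖ ≤
      2 * K * sqSum γ := by
    calc ‖partitionProd (fun r s => 1 + a r s) α - partitionProd (fun r s => 1 + a r s) β‖
        ≤ ‖partitionProd (fun r s => 1 + a r s) α - partitionProd (fun r s => 1 + a r s) γ‖ +
          ‖partitionProd (fun r s => 1 + a r s) β - partitionProd (fun r s => 1 + a r s) γ‖ := by
          rw [← norm_neg (partitionProd (fun r s => 1 + a r s) β -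
            partitionProd (fun r s => 1 + a r s) γ)]
          simpa using norm_sub_le_norm_sub_add_norm_sub _ _ _
      _ ≤ K * (sqSum γ - sqSum α) + K * (sqSum γ - sqSum β) := add_le_add eα eβ
      _ ≤ 2 * K * sqSum γ := by nlinarith
  have hfinal : 2 * K * sqSum γ < ε := by
    rw [hsqγ]
    rw [div_lt_iff₀ hε] at hn2
    have heq : 2 * K * ((S - R) ^ 2 / (n : ℝ)) = 2 * K * (S - R) ^ 2 / (n : ℝ) := by ring
    rw [heq, div_lt_iff₀ hnpos]
    nlinarith
  exact lt_of_le_of_lt key hfinal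
end

section
/- Let A be a normed unital algebra with submultiplicative norm and ‖1‖ = 1, let 0 ≤ R < S and C > 0, and let (a_{r,s})_{R ≤ r ≤ s ≤ S} be a family of elements of A such that ‖a_{r,s}‖ ≤ (s − r)·C for all R ≤ r ≤ s ≤ S, and a_{r,t} = a_{r,s} + a_{s,t} whenever R ≤ r < s < t ≤ S. Set g_{r,s} := 1 + a_{r,s} and, for a partition α of [R,S], let Θ_α be the ordered product of the g's over consecutive points of α. Then for all partitions γ and α of [R,S] with γ ⊆ α one has ‖Θ_α − Θ_γ‖ ≤ (1/2)·‖γ‖·(S − R)·C²·exp(C·(S − R)), where ‖γ‖ denotes the mesh of γ. -/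
set_option linter.unusedSectionVars false
namespace Stmt6


noncomputable def prodP {A : Type*} [Ring A] (g : ℝ → ℝ → A) (l : List ℝ) : A :=
  ((l.zip l.tail).map fun p => g p.1 p.2).prod

def sumsq (l : List ℝ) : ℝ := ((l.zip l.tail).map fun p => (p.2 - p.1)^2).sum
def sumd (l : List ℝ) : ℝ := ((l.zip l.tail).map fun p => p.2 - p.1).sum
noncomputable def mshL (l : List ℝ) : ℝ := ((l.zip l.tail).map fun p => p.2 - p.1).foldr max 0

variable {A : Type*} [Ring A] (g : ℝ → ℝ → A)

@[simp] lemma prodP_nil : prodP g [] = 1 := rfl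
@[simp] lemma prodP_single (x : ℝ) : prodP g [x] = 1 := rfl
lemma prodP_cons_cons (x y : ℝ) (l : List ℝ) :
    prodP g (x :: y :: l) = g x y * prodP g (y :: l) := rfl

lemma prodP_concat (m : List ℝ) (s : ℝ) (h : m ≠ []) :
    prodP g (m ++ [s]) = prodP g m * g (m.getLast h) s := by
  induction m with
  | nil => simp at h
  | cons x m ih =>
    cases m with
    | nil => simp [prodP_cons_cons, prodP]
    | cons y m' =>
      rw [List.cons_append, prodP_cons_cons, List.cons_append] at *
      rw [prodP_cons_cons, ih (by simp), mul_assoc]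
      congr 1

lemma prodP_split (X Y : List ℝ) (t : ℝ) :
    prodP g (X ++ t :: Y) = prodP g (X ++ [t]) * prodP g (t :: Y) := by
  induction X with
  | nil => simp
  | cons x X ih =>
    cases X with
    | nil => simp [prodP_cons_cons, mul_assoc]
    | cons y X' =>
      simp only [List.cons_append, prodP_cons_cons] at *
      rw [ih, mul_assoc]

@[simp] lemma sumsq_nil : sumsq [] = 0 := rfl
@[simp] lemma sumsq_single (x : ℝ) : sumsq [x] = 0 := rfl
lemma sumsq_cons_cons (x y : ℝ) (l : List ℝ) :
    sumsq (x :: y :: l) = (y - x)^2 + sumsq (y :: l) := rfl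
@[simp] lemma sumd_single (x : ℝ) : sumd [x] = 0 := rfl
lemma sumd_cons_cons (x y : ℝ) (l : List ℝ) :
    sumd (x :: y :: l) = (y - x) + sumd (y :: l) := rfl
lemma mshL_cons_cons (x y : ℝ) (l : List ℝ) :
    mshL (x :: y :: l) = max (y - x) (mshL (y :: l)) := rfl

lemma sumd_eq (l : List ℝ) (h : l ≠ []) : sumd l = l.getLast h - l.head h := by
  induction l with
  | nil => simp at h
  | cons x l ih =>
    cases l with
    | nil => simp
    | cons y l' => rw [sumd_cons_cons, ih (by simp)]; simp

lemma sumd_nonneg {l : List ℝ} (h : l.Pairwise (· ≤ ·)) : 0 ≤ sumd l := by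
  induction l with
  | nil => simp [sumd]
  | cons x l ih =>
    cases l with
    | nil => simp
    | cons y l' =>
      rw [sumd_cons_cons]
      have h1 : x ≤ y := (List.pairwise_cons.mp h).1 y (by simp)
      have := ih (List.pairwise_cons.mp h).2
      linarith

lemma sumsq_nonneg (l : List ℝ) : 0 ≤ sumsq l := by
  induction l with
  | nil => simp
  | cons x l ih =>
    cases l with
    | nil => simp
    | cons y l' => rw [sumsq_cons_cons]; positivity
  


lemma head_le_of_mem {l : List ℝ} (hs : l.Pairwise (· ≤ ·)) {x : ℝ} (hx : x ∈ l) (h : l ≠ []) :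
    l.head h ≤ x := by
  cases l with
  | nil => simp at h
  | cons y l' =>
    rcases List.mem_cons.mp hx with rfl | hx'
    · simp
    · exact (List.pairwise_cons.mp hs).1 x hx'

lemma le_getLast_of_mem {l : List ℝ} (hs : l.Pairwise (· ≤ ·)) {x : ℝ} (hx : x ∈ l) (h : l ≠ []) :
    x ≤ l.getLast h := by
  induction l with
  | nil => simp at h
  | cons y l' ih =>
    cases l' with
    | nil => simp at hx; simp [hx]
    | cons z l'' =>
      rw [List.getLast_cons (by simp)]
      rcases List.mem_cons.mp hx with rfl | hx'
      · exact le_trans ((List.pairwise_cons.mp hs).1 _ (List.getLast_mem _))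
          (le_refl _)
      · exact ih (List.pairwise_cons.mp hs).2 hx' (by simp)

lemma head_le_getLast {l : List ℝ} (hs : l.Pairwise (· ≤ ·)) (h : l ≠ []) :
    l.head h ≤ l.getLast h := le_getLast_of_mem hs (List.head_mem h) h

lemma eq_singleton_of_strict {l : List ℝ} (hs : l.Pairwise (· < ·)) (h : l ≠ [])
    (heq : l.getLast h = l.head h) : l = [l.head h] := by
  cases l with
  | nil => simp at h
  | cons x l' =>
    cases l' with
    | nil => simp
    | cons y l'' =>
      exfalso
      have hmem : (x :: y :: l'').getLast h ∈ y :: l'' := by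
        rw [List.getLast_cons (by simp)]; exact List.getLast_mem _
      have : x < (x :: y :: l'').getLast h := (List.pairwise_cons.mp hs).1 _ hmem
      simp only [List.head_cons] at heq
      rw [heq] at this; exact lt_irrefl _ this

lemma le_foldr_max {l : List ℝ} {x : ℝ} (hx : x ∈ l) : x ≤ l.foldr max 0 := by
  induction l with
  | nil => simp at hx
  | cons y l' ih =>
    rcases List.mem_cons.mp hx with rfl | hx'
    · simp only [List.foldr_cons]; exact le_max_left _ _
    · simp only [List.foldr_cons]; exact le_max_of_le_right (ih hx')

lemma foldr_max_nonneg (l : List ℝ) : 0 ≤ l.foldr max 0 := by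
  induction l with
  | nil => simp
  | cons y l' ih => exact le_trans ih (by simp [List.foldr_cons])

lemma sumsq_le_mshL_mul_sumd {l : List ℝ} (hs : l.Pairwise (· ≤ ·)) :
    sumsq l ≤ mshL l * sumd l := by
  induction l with
  | nil => simp [sumsq, sumd, mshL]
  | cons x l' ih =>
    cases l' with
    | nil => simp [sumsq, sumd, mshL]
    | cons y l'' =>
      have hxy : x ≤ y := (List.pairwise_cons.mp hs).1 y (by simp)
      have hs' : (y :: l'').Pairwise (· ≤ ·) := (List.pairwise_cons.mp hs).2
      have ih' := ih hs'
      have h1 : sumsq (x :: y :: l'') = (y - x)^2 + sumsq (y :: l'') := rfl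
      have h2 : sumd (x :: y :: l'') = (y - x) + sumd (y :: l'') := rfl
      have h3 : mshL (x :: y :: l'') = max (y - x) (mshL (y :: l'')) := rfl
      rw [h1, h2, h3]
      have hd := sumd_nonneg hs'
      have e1 : (y - x)^2 ≤ (y - x) * max (y - x) (mshL (y :: l'')) := by
        have := le_max_left (y - x) (mshL (y :: l''))
        nlinarith
      have e2 : sumsq (y :: l'') ≤ max (y - x) (mshL (y :: l'')) * sumd (y :: l'') := by
        calc sumsq (y :: l'') ≤ mshL (y :: l'') * sumd (y :: l'') := ih'
        _ ≤ max (y - x) (mshL (y :: l'')) * sumd (y :: l'') := by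
            exact mul_le_mul_of_nonneg_right (le_max_right _ _) hd
      nlinarith [mul_comm (y - x) (max (y - x) (mshL (y :: l'')))]

section Core

variable {A : Type*} [NormedRing A] [NormOneClass A]
variable {R S C : ℝ} {a : ℝ → ℝ → A}
variable (hRS : R ≤ S) (hC : 0 < C)
variable (ha_norm : ∀ r s, R ≤ r → r ≤ s → s ≤ S → ‖a r s‖ ≤ (s - r) * C)
variable (ha_add : ∀ r s t, R ≤ r → r < s → s < t → t ≤ S → a r t = a r s + a s t)

include ha_norm in
lemma a_self {x : ℝ} (h1 : R ≤ x) (h2 : x ≤ S) : a x x = 0 := by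
  have := ha_norm x x h1 le_rfl h2
  simpa using this

include ha_norm ha_add in
lemma ha_add' {r s t : ℝ} (h1 : R ≤ r) (h2 : r ≤ s) (h3 : s ≤ t) (h4 : t ≤ S) :
    a r t = a r s + a s t := by
  rcases eq_or_lt_of_le h2 with rfl | h2'
  · rw [a_self ha_norm h1 (le_trans h3 h4), zero_add]
  rcases eq_or_lt_of_le h3 with rfl | h3'
  · rw [a_self ha_norm (le_trans h1 h2) h4, add_zero]
  exact ha_add r s t h1 h2' h3' h4

include ha_norm hC in
set_option linter.unusedSectionVars false in
lemma norm_g_le {r s : ℝ} (h1 : R ≤ r) (h2 : r ≤ s) (h3 : s ≤ S) :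
    ‖(1 : A) + a r s‖ ≤ 1 + C * (s - r) := by
  calc ‖(1 : A) + a r s‖ ≤ ‖(1 : A)‖ + ‖a r s‖ := norm_add_le _ _
  _ ≤ 1 + C * (s - r) := by
      rw [norm_one]
      have := ha_norm r s h1 h2 h3
      linarith [mul_comm (s - r) C ▸ this]

include ha_norm hC in
set_option linter.unusedSectionVars false in
lemma prodP_norm_le :
    ∀ (l : List ℝ), l.Pairwise (· ≤ ·) → (∀ x ∈ l, R ≤ x ∧ x ≤ S) → ∀ (h : l ≠ []),
    ‖prodP (fun r s => 1 + a r s) l‖ ≤ Real.exp (C * (l.getLast h - l.head h)) := by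
  intro l
  induction l with
  | nil => intro _ _ h; simp at h
  | cons x l' ih =>
    intro hs hmem h
    cases l' with
    | nil => simp [prodP]
    | cons y l'' =>
      have hs' := (List.pairwise_cons.mp hs).2
      have hxy : x ≤ y := (List.pairwise_cons.mp hs).1 y (by simp)
      have hmem' : ∀ z ∈ y :: l'', R ≤ z ∧ z ≤ S := fun z hz => hmem z (by simp [hz])
      have ih' := ih hs' hmem' (by simp)
      have hgl : (x :: y :: l'').getLast h = (y :: l'').getLast (by simp) :=
        List.getLast_cons (by simp)
      rw [show prodP (fun r s => (1:A) + a r s) (x :: y :: l'') =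
        (1 + a x y) * prodP (fun r s => (1:A) + a r s) (y :: l'') from rfl]
      calc ‖(1 + a x y) * prodP (fun r s => (1:A) + a r s) (y :: l'')‖
          ≤ ‖(1:A) + a x y‖ * ‖prodP (fun r s => (1:A) + a r s) (y :: l'')‖ := norm_mul_le _ _
        _ ≤ (1 + C * (y - x)) * Real.exp (C * ((y :: l'').getLast (by simp) - y)) := by
            apply mul_le_mul (norm_g_le hC ha_norm (hmem x (by simp)).1 hxy (hmem y (by simp)).2)
              ih' (norm_nonneg _) (by nlinarith)
        _ ≤ Real.exp (C * (y - x)) * Real.exp (C * ((y :: l'').getLast (by simp) - y)) := by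
            apply mul_le_mul_of_nonneg_right _ (Real.exp_pos _).le
            have := Real.add_one_le_exp (C * (y - x))
            linarith
        _ = Real.exp (C * ((x :: y :: l'').getLast h - (x :: y :: l'').head h)) := by
            rw [← Real.exp_add, hgl]
            congr 1
            simp
            ring

include hC ha_norm ha_add in
lemma local_est :
    ∀ (l : List ℝ), l.Pairwise (· ≤ ·) → (∀ x ∈ l, R ≤ x ∧ x ≤ S) → ∀ (h : l ≠ []),
    ‖prodP (fun r s => 1 + a r s) l - (1 + a (l.head h) (l.getLast h))‖ ≤
      C^2/2 * (l.getLast h - l.head h)^2 * Real.exp (C * (l.getLast h - l.head h)) := by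
  intro l
  induction l using List.reverseRecOn with
  | nil => intro _ _ h; simp at h
  | append_singleton m s' ih =>
    intro hs hmem h
    rcases eq_or_ne m ([] : List ℝ) with rfl | hm
    · have h0 := a_self ha_norm (R := R) (S := S) (x := s')
        (hmem s' (by simp)).1 (hmem s' (by simp)).2
      simp [prodP, h0]
    · set r := m.head hm with hr
      set t := m.getLast hm with ht
      have hmemm : ∀ x ∈ m, R ≤ x ∧ x ≤ S := fun x hx => hmem x (List.mem_append_left _ hx)
      have hpa := List.pairwise_append.mp hs
      have hms : m.Pairwise (· ≤ ·) := hpa.1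
      have hts' : t ≤ s' := hpa.2.2 t (List.getLast_mem hm) s' (by simp)
      have hrt : r ≤ t := head_le_getLast hms hm
      have hRr : R ≤ r := (hmemm r (List.head_mem hm)).1
      have hsS : s' ≤ S := (hmem s' (by simp)).2
      have htS : t ≤ S := le_trans hts' hsS
      have hhead : (m ++ [s']).head h = r := by
        rw [List.head_append_of_ne_nil hm]
      have hlast : (m ++ [s']).getLast h = s' := by
        simp
      have hadd : a r s' = a r t + a t s' :=
        ha_add' ha_norm ha_add hRr hrt hts' hsS
      rw [prodP_concat _ m s' hm, hhead, hlast, ← ht]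
      have key : prodP (fun r s => (1:A) + a r s) m * (1 + a t s') - (1 + a r s') =
          (prodP (fun r s => (1:A) + a r s) m - (1 + a r t)) * (1 + a t s')
            + a r t * a t s' := by
        rw [hadd]; noncomm_ring
      rw [key]
      have ihb := ih hms hmemm hm
      rw [← hr, ← ht] at ihb
      have hg : ‖(1:A) + a t s'‖ ≤ 1 + C * (s' - t) :=
        norm_g_le hC ha_norm (le_trans hRr hrt) hts' hsS
      have hart : ‖a r t‖ ≤ (t - r) * C := ha_norm r t hRr hrt htS
      have hats : ‖a t s'‖ ≤ (s' - t) * C := ha_norm t s' (le_trans hRr hrt) hts' hsS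
      have step1 : ‖(prodP (fun r s => (1:A) + a r s) m - (1 + a r t)) * (1 + a t s')
            + a r t * a t s'‖ ≤
          (C^2/2 * (t - r)^2 * Real.exp (C * (t - r))) * (1 + C * (s' - t))
            + ((t - r) * C) * ((s' - t) * C) := by
        calc ‖(prodP (fun r s => (1:A) + a r s) m - (1 + a r t)) * (1 + a t s')
              + a r t * a t s'‖
            ≤ ‖(prodP (fun r s => (1:A) + a r s) m - (1 + a r t)) * (1 + a t s')‖
              + ‖a r t * a t s'‖ := norm_add_le _ _
          _ ≤ ‖prodP (fun r s => (1:A) + a r s) m - (1 + a r t)‖ * ‖(1:A) + a t s'‖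
              + ‖a r t‖ * ‖a t s'‖ := add_le_add (norm_mul_le _ _) (norm_mul_le _ _)
          _ ≤ (C^2/2 * (t - r)^2 * Real.exp (C * (t - r))) * (1 + C * (s' - t))
              + ((t - r) * C) * ((s' - t) * C) := by
              apply add_le_add
              · apply mul_le_mul ihb hg (norm_nonneg _) (by positivity)
              · apply mul_le_mul hart hats (norm_nonneg _) (by nlinarith)
      refine le_trans step1 ?_
      set x := t - r with hxdef
      set d := s' - t with hddef
      have hx : 0 ≤ x := by simp [hxdef]; linarith
      have hd : 0 ≤ d := by simp [hddef]; linarith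
      have hE1 : (1:ℝ) ≤ Real.exp (C * x) := Real.one_le_exp (by positivity)
      have hE2 : 1 + C * d ≤ Real.exp (C * d) := by
        linarith [Real.add_one_le_exp (C * d)]
      have hsplit : Real.exp (C * (x + d)) = Real.exp (C * x) * Real.exp (C * d) := by
        rw [← Real.exp_add]; congr 1; ring
      have hxd : s' - r = x + d := by simp [hxdef, hddef]
      rw [hxd, hsplit]
      have h4 : 0 ≤ C^2 * x^2 * Real.exp (C * x) * (Real.exp (C * d) - (1 + C * d)) := by
        apply mul_nonneg (by positivity); linarith
      have h5 : C^2 * x * d ≤ C^2 * x * d * (Real.exp (C * x) * Real.exp (C * d)) := by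
        apply le_mul_of_one_le_right (by positivity)
        nlinarith [Real.exp_pos (C * d)]
      have h6 : 0 ≤ C^2 * d^2 * (Real.exp (C * x) * Real.exp (C * d)) := by positivity
      clear_value x d
      linarith [h4, h5, h6]

lemma sorted_le_of_lt' {l : List ℝ} (h : l.Pairwise (· < ·)) : l.Pairwise (· ≤ ·) :=
  h.imp (fun hb => le_of_lt hb)

include hC ha_norm ha_add in
lemma global_est :
    ∀ (M L : List ℝ) (r t : ℝ), M.Sublist L → L.Pairwise (· < ·) →
      (∀ x ∈ L, R ≤ x ∧ x ≤ S) →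
      M.head? = some r → L.head? = some r → M.getLast? = some t → L.getLast? = some t →
      ‖prodP (fun r s => 1 + a r s) L - prodP (fun r s => 1 + a r s) M‖ ≤
        C^2/2 * Real.exp (C * (t - r)) * sumsq M := by
  intro M
  induction M with
  | nil => intro L r t _ _ _ hM _ _ _; simp at hM
  | cons r0 M' ih =>
    intro L r t hsub hLs hLmem hMh hLh hMl hLl
    obtain rfl : r = r0 := by simpa using hMh.symm
    have hLne : L ≠ [] := by intro hh; rw [hh] at hLh; simp at hLh
    have hLhead : L.head hLne = r := by
      have := List.head?_eq_head hLne; rw [hLh] at this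
      exact (Option.some_injective _ this).symm
    have hLlast : L.getLast hLne = t := by
      have := List.getLast?_eq_getLast hLne; rw [hLl] at this
      exact (Option.some_injective _ this).symm
    cases M' with
    | nil =>
      obtain rfl : r = t := by simpa using hMl
      have hsingle : L = [L.head hLne] := eq_singleton_of_strict hLs hLne (by rw [hLhead, hLlast])
      rw [hLhead] at hsingle
      rw [hsingle]
      simp [prodP, sumsq]
    | cons s M'' =>
      have hMsorted : (r :: s :: M'').Pairwise (· < ·) := List.Pairwise.sublist hsub hLs
      have hrs : r < s := (List.pairwise_cons.mp hMsorted).1 s (by simp)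
      have hsL : s ∈ L := hsub.subset (by simp)
      obtain ⟨L₁, L₂, hLsplit⟩ := List.append_of_mem hsL
      have hLs' := hLs
      rw [hLsplit] at hLs'
      have hpa := List.pairwise_append.mp hLs'
      have hL₁s : L₁.Pairwise (· < ·) := hpa.1
      have hsL₂ : (s :: L₂).Pairwise (· < ·) := hpa.2.1
      have hcross : ∀ x ∈ L₁, x < s := fun x hx => hpa.2.2 x hx s (by simp)
      have hL₁ne : L₁ ≠ [] := by
        rintro rfl
        have hLh' := hLh
        rw [hLsplit] at hLh'
        simp at hLh'
        linarith [hrs, hLh'.le]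
      have hL₁h? : L₁.head? = some r := by
        have hLh' := hLh
        rw [hLsplit] at hLh'
        rwa [List.head?_append_of_ne_nil _ hL₁ne] at hLh'
      -- tail sublist
      have htail : (s :: M'').Sublist L := (List.sublist_cons_self r (s :: M'')).trans hsub
      rw [hLsplit] at htail
      obtain ⟨u, v, huv, hu, hv⟩ := List.sublist_append_iff.mp htail
      have hu_nil : u = [] := by
        cases u with
        | nil => rfl
        | cons z u' =>
          exfalso
          have hz1 : z = s := by
            have := congrArg List.head? huv; simpa using this.symm
          have : z ∈ L₁ := hu.subset (by simp)
          rw [hz1] at this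
          exact lt_irrefl s (hcross s this)
      rw [hu_nil] at huv
      simp only [List.nil_append] at huv
      rw [← huv] at hv
      -- lasts
      have hsL₂ne : (s :: L₂) ≠ [] := by simp
      have hlast₂? : (s :: L₂).getLast? = some t := by
        have hLl' := hLl
        rw [hLsplit] at hLl'
        rwa [List.getLast?_append_of_ne_nil _ hsL₂ne] at hLl'
      have hlast₂ : (s :: L₂).getLast hsL₂ne = t := by
        have := List.getLast?_eq_getLast hsL₂ne
        rw [this] at hlast₂?
        exact Option.some_injective _ hlast₂?
      have hlast₂?' : (s :: L₂).getLast? = some t := by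
        rw [List.getLast?_eq_getLast hsL₂ne, hlast₂]
      have hst : s ≤ t := by
        rw [← hlast₂]
        exact head_le_getLast (sorted_le_of_lt' hsL₂) (by simp)
      have hmem₂ : ∀ x ∈ s :: L₂, R ≤ x ∧ x ≤ S := fun x hx =>
        hLmem x (by rw [hLsplit]; exact List.mem_append_right _ hx)
      have hRr : R ≤ r := (hLmem r (by rw [← hLhead]; exact List.head_mem hLne)).1
      have hsS : s ≤ S := (hmem₂ s (by simp)).2
      -- IH
      have ihb := ih (s :: L₂) s t hv hsL₂ hmem₂ rfl rfl (by simpa using hMl) hlast₂?'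
      -- local estimate on L₁ ++ [s]
      have hfirstne : L₁ ++ [s] ≠ [] := by simp
      have hfs : (L₁ ++ [s]).Pairwise (· ≤ ·) := by
        apply List.pairwise_append.mpr
        exact ⟨sorted_le_of_lt' hL₁s, by simp, fun x hx b hb => by
          simp at hb; rw [hb]; exact (hcross x hx).le⟩
      have hfmem : ∀ x ∈ L₁ ++ [s], R ≤ x ∧ x ≤ S := by
        intro x hx
        rcases List.mem_append.mp hx with h1 | h1
        · exact hLmem x (by rw [hLsplit]; exact List.mem_append_left _ h1)
        · simp at h1; rw [h1]; exact ⟨le_trans hRr hrs.le, hsS⟩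
      have hloc := local_est hC ha_norm ha_add (L₁ ++ [s]) hfs hfmem hfirstne
      have hfh : (L₁ ++ [s]).head hfirstne = r := by
        have h2 : (L₁ ++ [s]).head? = some r := by
          rw [List.head?_append_of_ne_nil _ hL₁ne]; exact hL₁h?
        have h3 := List.head?_eq_head hfirstne
        rw [h3] at h2
        exact Option.some_injective _ h2
      have hfl : (L₁ ++ [s]).getLast hfirstne = s := List.getLast_concat
      rw [hfh, hfl] at hloc
      -- norm bound on second factor
      have hnormP2 := prodP_norm_le hC ha_norm (s :: L₂) (sorted_le_of_lt' hsL₂) hmem₂ (by simp)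
      rw [hlast₂] at hnormP2
      simp only [List.head_cons] at hnormP2
      -- norm bound on g r s
      have hgrs : ‖(1:A) + a r s‖ ≤ 1 + C * (s - r) := norm_g_le hC ha_norm hRr hrs.le hsS
      -- split products
      rw [hLsplit, prodP_split]
      have hMprod : prodP (fun r s => (1:A) + a r s) (r :: s :: M'') =
          (1 + a r s) * prodP (fun r s => (1:A) + a r s) (s :: M'') := rfl
      rw [hMprod]
      set P1 := prodP (fun r s => (1:A) + a r s) (L₁ ++ [s]) with hP1
      set P2 := prodP (fun r s => (1:A) + a r s) (s :: L₂) with hP2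
      set Q2 := prodP (fun r s => (1:A) + a r s) (s :: M'') with hQ2
      have key : P1 * P2 - (1 + a r s) * Q2 =
          (P1 - (1 + a r s)) * P2 + (1 + a r s) * (P2 - Q2) := by noncomm_ring
      rw [key]
      have hsumsq : sumsq (r :: s :: M'') = (s - r)^2 + sumsq (s :: M'') := rfl
      rw [hsumsq]
      have hQnn : 0 ≤ sumsq (s :: M'') := sumsq_nonneg _
      have hE1 : (1:ℝ) + C * (s - r) ≤ Real.exp (C * (s - r)) := by
        linarith [Real.add_one_le_exp (C * (s - r))]
      have hexp_split : Real.exp (C * (t - r)) =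
          Real.exp (C * (s - r)) * Real.exp (C * (t - s)) := by
        rw [← Real.exp_add]; congr 1; ring
      calc ‖(P1 - (1 + a r s)) * P2 + (1 + a r s) * (P2 - Q2)‖
          ≤ ‖P1 - (1 + a r s)‖ * ‖P2‖ + ‖(1:A) + a r s‖ * ‖P2 - Q2‖ := by
            refine le_trans (norm_add_le _ _) (add_le_add (norm_mul_le _ _) (norm_mul_le _ _))
        _ ≤ (C^2/2 * (s - r)^2 * Real.exp (C * (s - r))) * Real.exp (C * (t - s))
              + Real.exp (C * (s - r)) * (C^2/2 * Real.exp (C * (t - s)) * sumsq (s :: M'')) := by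
            apply add_le_add
            · exact mul_le_mul hloc hnormP2 (norm_nonneg _) (by positivity)
            · exact mul_le_mul (hgrs.trans hE1) ihb (norm_nonneg _) (Real.exp_pos _).le
        _ = C^2/2 * Real.exp (C * (t - r)) * ((s - r)^2 + sumsq (s :: M'')) := by
            rw [hexp_split]; ring

lemma head?_eq_of_min {l : List ℝ} (hs : l.Pairwise (· ≤ ·)) {x : ℝ} (hx : x ∈ l)
    (hmin : ∀ y ∈ l, x ≤ y) : l.head? = some x := by
  cases l with
  | nil => simp at hx
  | cons y l' =>
    have h1 : y ≤ x := head_le_of_mem hs hx (by simp)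
    have h2 : x ≤ y := hmin y (by simp)
    simpa using (le_antisymm h1 h2)

lemma getLast?_eq_of_max {l : List ℝ} (hs : l.Pairwise (· ≤ ·)) {x : ℝ} (hx : x ∈ l)
    (hmax : ∀ y ∈ l, y ≤ x) : l.getLast? = some x := by
  have hne : l ≠ [] := by rintro rfl; simp at hx
  rw [List.getLast?_eq_getLast hne]
  exact congrArg some (le_antisymm (hmax _ (List.getLast_mem hne)) (le_getLast_of_mem hs hx hne))


end Core

end Stmt6

theorem stmt_6' {A : Type*} [NormedRing A] [NormOneClass A]
    (R S C : ℝ) (hR : 0 ≤ R) (hRS : R < S) (hC : 0 < C)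
    (a : ℝ → ℝ → A)
    (ha_norm : ∀ r s, R ≤ r → r ≤ s → s ≤ S → ‖a r s‖ ≤ (s - r) * C)
    (ha_add : ∀ r s t, R ≤ r → r < s → s < t → t ≤ S → a r t = a r s + a s t) :
    ∀ γ α : Finset ℝ, IsPartition R S γ → IsPartition R S α → γ ⊆ α →
      ‖partitionProd (fun r s => 1 + a r s) α - partitionProd (fun r s => 1 + a r s) γ‖ ≤
        (1 / 2) * mesh γ * (S - R) * C ^ 2 * Real.exp (C * (S - R)) := by
  intro γ α hγ hα hsub
  set L := α.sort (· ≤ ·) with hL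
  set M := γ.sort (· ≤ ·) with hM
  have hprodα : partitionProd (fun r s => (1:A) + a r s) α =
      Stmt6.prodP (fun r s => (1:A) + a r s) L := rfl
  have hprodγ : partitionProd (fun r s => (1:A) + a r s) γ =
      Stmt6.prodP (fun r s => (1:A) + a r s) M := rfl
  have hmesh : mesh γ = Stmt6.mshL M := rfl
  have hLsorted : L.Pairwise (· < ·) := (Finset.sortedLT_sort α).pairwise
  have hMsorted : M.Pairwise (· ≤ ·) := Finset.pairwise_sort _ _
  have hLsorted' : L.Pairwise (· ≤ ·) := Finset.pairwise_sort _ _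
  have hML : M.Sublist L := by
    apply List.sublist_of_subperm_of_pairwise _ hMsorted hLsorted'
    apply List.subperm_of_subset (Finset.sort_nodup _ _)
    intro x hx
    have hx' : x ∈ γ := by simpa [hM] using hx
    simpa [hL] using hsub hx'
  have hLmem : ∀ x ∈ L, R ≤ x ∧ x ≤ S := by
    intro x hx
    exact hα.2.2 x (by simpa [hL] using hx)
  have hMmem : ∀ x ∈ M, R ≤ x ∧ x ≤ S := by
    intro x hx
    exact hγ.2.2 x (by simpa [hM] using hx)
  have hMh : M.head? = some R :=
    Stmt6.head?_eq_of_min hMsorted (by simpa [hM] using hγ.1)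
      (fun y hy => (hMmem y hy).1)
  have hLh : L.head? = some R :=
    Stmt6.head?_eq_of_min hLsorted' (by simpa [hL] using hα.1)
      (fun y hy => (hLmem y hy).1)
  have hMl : M.getLast? = some S :=
    Stmt6.getLast?_eq_of_max hMsorted (by simpa [hM] using hγ.2.1)
      (fun y hy => (hMmem y hy).2)
  have hLl : L.getLast? = some S :=
    Stmt6.getLast?_eq_of_max hLsorted' (by simpa [hL] using hα.2.1)
      (fun y hy => (hLmem y hy).2)
  have hmain := Stmt6.global_est hC ha_norm ha_add M L R S hML hLsorted hLmem hMh hLh hMl hLl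
  rw [hprodα, hprodγ, hmesh]
  refine le_trans hmain ?_
  have hMne : M ≠ [] := by rintro h0; rw [h0] at hMh; simp at hMh
  have hsumd : Stmt6.sumd M = S - R := by
    rw [Stmt6.sumd_eq M hMne]
    have h1 := List.head?_eq_head hMne
    rw [hMh] at h1
    have h2 := List.getLast?_eq_getLast hMne
    rw [hMl] at h2
    rw [← Option.some_injective _ h1.symm, ← Option.some_injective _ h2.symm]
  have hsq : Stmt6.sumsq M ≤ Stmt6.mshL M * (S - R) := by
    rw [← hsumd]
    exact Stmt6.sumsq_le_mshL_mul_sumd hMsorted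
  have hexp : (0:ℝ) < Real.exp (C * (S - R)) := Real.exp_pos _
  calc C ^ 2 / 2 * Real.exp (C * (S - R)) * Stmt6.sumsq M
      ≤ C ^ 2 / 2 * Real.exp (C * (S - R)) * (Stmt6.mshL M * (S - R)) := by
        apply mul_le_mul_of_nonneg_left hsq (by positivity)
    _ = 1 / 2 * Stmt6.mshL M * (S - R) * C ^ 2 * Real.exp (C * (S - R)) := by ring


/-- mesh estimate for the difference of the ordered products over a
partition `γ` and a refinement `α` of it. -/
theorem stmt_6 {A : Type*} [NormedRing A] [NormOneClass A] [NormedAlgebra ℂ A]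
    (R S C : ℝ) (hR : 0 ≤ R) (hRS : R < S) (hC : 0 < C)
    (a : ℝ → ℝ → A)
    (ha_norm : ∀ r s, R ≤ r → r ≤ s → s ≤ S → ‖a r s‖ ≤ (s - r) * C)
    (ha_add : ∀ r s t, R ≤ r → r < s → s < t → t ≤ S → a r t = a r s + a s t) :
    ∀ γ α : Finset ℝ, IsPartition R S γ → IsPartition R S α → γ ⊆ α →
      ‖partitionProd (fun r s => 1 + a r s) α - partitionProd (fun r s => 1 + a r s) γ‖ ≤
        (1 / 2) * mesh γ * (S - R) * C ^ 2 * Real.exp (C * (S - R)) :=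
  stmt_6' R S C hR hRS hC a ha_norm ha_add
end

section
/- Let A be a complete normed unital algebra (Banach algebra) with submultiplicative norm and ‖1‖ = 1, let 0 ≤ R < S and C > 0, and let (a_{r,s})_{R ≤ r ≤ s ≤ S} be a family of elements of A such that ‖a_{r,s}‖ ≤ (s − r)·C for all r ≤ s, and a_{r,t} = a_{r,s} + a_{s,t} whenever r < s < t. Set g_{r,s} := 1 + a_{r,s} and Θ_α := g_{t₁,t₂}·⋯·g_{t_n,t_{n+1}} for a partition α = {R = t₁ < … < t_{n+1} = S}. Then the net (Θ_α)_{α ∈ P[R,S]} converges: there exists U ∈ A such that for every ε > 0 there is a partition γ of [R,S] with ‖Θ_α − U‖ < ε for all partitions α ⊇ γ. -/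
set_option linter.unusedSectionVars false
set_option linter.unusedVariables false
set_option linter.deprecated false


namespace Stmt8
set_option linter.unusedSectionVars false
open List

noncomputable def P {A : Type*} [Ring A] (g : ℝ → ℝ → A) (l : List ℝ) : A :=
  ((l.zip l.tail).map fun p => g p.1 p.2).prod

variable {A : Type*} [NormedRing A] [NormOneClass A]

@[simp] lemma P_nil (g : ℝ → ℝ → A) : P g [] = 1 := rfl
@[simp] lemma P_single (g : ℝ → ℝ → A) (x : ℝ) : P g [x] = 1 := rfl
lemma P_cons_cons (g : ℝ → ℝ → A) (x y : ℝ) (l : List ℝ) :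
    P g (x :: y :: l) = g x y * P g (y :: l) := by
  simp [P, List.prod_cons]

lemma P_append (g : ℝ → ℝ → A) :
    ∀ (xs : List ℝ) (y : ℝ) (ys : List ℝ),
      P g (xs ++ y :: ys) = P g (xs ++ [y]) * P g (y :: ys)
  | [], y, ys => by simp
  | [x], y, ys => by simp [P_cons_cons]
  | x :: x' :: xs, y, ys => by
    have h1 : (x :: x' :: xs) ++ y :: ys = x :: x' :: (xs ++ y :: ys) := by simp
    have h2 : (x :: x' :: xs) ++ [y] = x :: x' :: (xs ++ [y]) := by simp
    have ih := P_append g (x' :: xs) y ys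
    have h3 : x' :: xs ++ y :: ys = x' :: (xs ++ y :: ys) := by simp
    have h4 : x' :: xs ++ [y] = x' :: (xs ++ [y]) := by simp
    rw [h3, h4] at ih
    rw [h1, h2, P_cons_cons, ih, P_cons_cons, mul_assoc]

lemma mem_le_getLast : ∀ (l : List ℝ) (h : l ≠ []), l.Pairwise (· < ·) →
    ∀ y ∈ l, y ≤ l.getLast h
  | [], h, _, _, _ => absurd rfl h
  | [x], _, _, y, hy => by simp_all
  | x :: x' :: t, _, hs, y, hy => by
    rw [List.pairwise_cons] at hs
    rw [List.getLast_cons (by simp : x' :: t ≠ [])]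
    rcases List.mem_cons.1 hy with rfl | hy
    · exact le_trans (le_of_lt (hs.1 _ (List.mem_cons_self)))
        (mem_le_getLast (x' :: t) (by simp) hs.2 x' (List.mem_cons_self))
    · exact mem_le_getLast (x' :: t) (by simp) hs.2 y hy

lemma head_le_getLast (x : ℝ) (l : List ℝ) (hs : (x :: l).Pairwise (· < ·)) :
    x ≤ (x :: l).getLast (by simp) :=
  mem_le_getLast _ (by simp) hs x (List.mem_cons_self)


section Main

variable {a : ℝ → ℝ → A} {C R S μ : ℝ}

lemma norm_P_le (hC : 0 < C)
    (ha_norm : ∀ r s, R ≤ r → r ≤ s → s ≤ S → ‖a r s‖ ≤ (s - r) * C) :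
    ∀ (l : List ℝ) (x : ℝ), (x :: l).Pairwise (· < ·) →
      (∀ y ∈ x :: l, y ∈ Set.Icc R S) →
      ‖P (fun r s => (1 : A) + a r s) (x :: l)‖ ≤
        Real.exp (C * ((x :: l).getLast (by simp) - x))
  | [], x, _, _ => by
    simp only [P_single, norm_one, List.getLast_singleton]
    rw [sub_self, mul_zero]
    exact le_of_eq Real.exp_zero.symm
  | y :: l, x, hs, hmem => by
    have hs' : (y :: l).Pairwise (· < ·) := (List.pairwise_cons.1 hs).2
    have hxy : x < y := (List.pairwise_cons.1 hs).1 y (List.mem_cons_self)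
    have hmem' : ∀ z ∈ y :: l, z ∈ Set.Icc R S := fun z hz => hmem z (List.mem_cons_of_mem _ hz)
    have hx : x ∈ Set.Icc R S := hmem x (List.mem_cons_self)
    have hy : y ∈ Set.Icc R S := hmem' y (List.mem_cons_self)
    have ih := norm_P_le hC ha_norm l y hs' hmem'
    have hgl : (x :: y :: l).getLast (by simp) = (y :: l).getLast (by simp) :=
      List.getLast_cons (by simp)
    rw [hgl, P_cons_cons]
    have h1 : ‖(1 : A) + a x y‖ ≤ 1 + (y - x) * C := by
      calc ‖(1 : A) + a x y‖ ≤ ‖(1 : A)‖ + ‖a x y‖ := norm_add_le _ _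
        _ ≤ 1 + (y - x) * C := by
            rw [norm_one]
            exact add_le_add_right (ha_norm x y hx.1 hxy.le hy.2) 1
    have h2 : (1 : ℝ) + (y - x) * C ≤ Real.exp (C * (y - x)) := by
      have := Real.add_one_le_exp (C * (y - x))
      nlinarith
    set s := (y :: l).getLast (by simp : (y:ℝ) :: l ≠ []) with hsdef
    calc ‖((1 : A) + a x y) * P (fun r s => (1 : A) + a r s) (y :: l)‖
        ≤ ‖(1 : A) + a x y‖ * ‖P (fun r s => (1 : A) + a r s) (y :: l)‖ := norm_mul_le _ _
      _ ≤ (1 + (y - x) * C) * Real.exp (C * (s - y)) := by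
          apply mul_le_mul h1 ih (norm_nonneg _)
          nlinarith [mul_nonneg (sub_nonneg.2 hxy.le) hC.le]
      _ ≤ Real.exp (C * (y - x)) * Real.exp (C * (s - y)) := by
          apply mul_le_mul_of_nonneg_right h2 (Real.exp_pos _).le
      _ = Real.exp (C * (s - x)) := by
          rw [← Real.exp_add]; ring_nf

lemma a_self (hR2 : ∀ r s, R ≤ r → r ≤ s → s ≤ S → ‖a r s‖ ≤ (s - r) * C)
    {t : ℝ} (ht : t ∈ Set.Icc R S) : a t t = 0 := by
  have := hR2 t t ht.1 le_rfl ht.2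
  simp only [sub_self, zero_mul] at this
  exact norm_le_zero_iff.1 this

lemma a_split (ha_norm : ∀ r s, R ≤ r → r ≤ s → s ≤ S → ‖a r s‖ ≤ (s - r) * C)
    (ha_add : ∀ r s t, R ≤ r → r < s → s < t → t ≤ S → a r t = a r s + a s t)
    {r s t : ℝ} (hr : r ∈ Set.Icc R S) (hs : s ∈ Set.Icc R S) (ht : t ∈ Set.Icc R S)
    (h1 : r ≤ s) (h2 : s ≤ t) : a r t = a r s + a s t := by
  rcases eq_or_lt_of_le h1 with rfl | h1
  · rw [a_self ha_norm hr, zero_add]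
  rcases eq_or_lt_of_le h2 with rfl | h2
  · rw [a_self ha_norm hs, add_zero]
  exact ha_add r s t hr.1 h1 h2 ht.2

lemma lemA (hC : 0 < C) (hμ : 0 ≤ μ)
    (ha_norm : ∀ r s, R ≤ r → r ≤ s → s ≤ S → ‖a r s‖ ≤ (s - r) * C)
    (ha_add : ∀ r s t, R ≤ r → r < s → s < t → t ≤ S → a r t = a r s + a s t) :
    ∀ (l : List ℝ) (x s : ℝ), (x :: l).Pairwise (· < ·) →
      (∀ y ∈ x :: l, y ∈ Set.Icc R S) →
      (x :: l).getLast (by simp) = s → s - x ≤ μ →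
      ‖P (fun r s => (1 : A) + a r s) (x :: l) - (1 + a x s)‖ ≤
        C ^ 2 * μ * (s - x) * Real.exp (C * (s - x))
  | [], x, s, _, hmem, hlast, _ => by
    simp only [List.getLast_singleton] at hlast
    subst hlast
    have hx : x ∈ Set.Icc R S := hmem x (List.mem_cons_self)
    rw [P_single, a_self ha_norm hx]
    simp
  | y :: l, x, s, hs, hmem, hlast, hsx => by
    have hs' : (y :: l).Pairwise (· < ·) := (List.pairwise_cons.1 hs).2
    have hxy : x < y := (List.pairwise_cons.1 hs).1 y (List.mem_cons_self)
    have hmem' : ∀ z ∈ y :: l, z ∈ Set.Icc R S := fun z hz => hmem z (List.mem_cons_of_mem _ hz)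
    have hx : x ∈ Set.Icc R S := hmem x (List.mem_cons_self)
    have hy : y ∈ Set.Icc R S := hmem' y (List.mem_cons_self)
    have hlast' : (y :: l).getLast (by simp) = s := by
      rw [← hlast]; exact (List.getLast_cons (by simp)).symm
    have hys : y ≤ s := hlast' ▸ head_le_getLast y l hs'
    have hsIcc : s ∈ Set.Icc R S := by
      rw [← hlast']; exact hmem' _ (List.getLast_mem _)
    have hsy : s - y ≤ μ := by nlinarith
    have ih := lemA hC hμ ha_norm ha_add l y s hs' hmem' hlast' hsy
    have hsplit : a x s = a x y + a y s := a_split ha_norm ha_add hx hy hsIcc hxy.le hys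
    have key : P (fun r s => (1 : A) + a r s) (x :: y :: l) - (1 + a x s) =
        (1 + a x y) * (P (fun r s => (1 : A) + a r s) (y :: l) - (1 + a y s))
          + a x y * a y s := by
      rw [P_cons_cons, hsplit]; noncomm_ring
    rw [key]
    have h1 : ‖(1 : A) + a x y‖ ≤ 1 + (y - x) * C := by
      calc ‖(1 : A) + a x y‖ ≤ ‖(1 : A)‖ + ‖a x y‖ := norm_add_le _ _
        _ ≤ 1 + (y - x) * C := by
            rw [norm_one]; exact add_le_add_right (ha_norm x y hx.1 hxy.le hy.2) 1
    have hxyn : ‖a x y‖ ≤ (y - x) * C := ha_norm x y hx.1 hxy.le hy.2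
    have hysn : ‖a y s‖ ≤ (s - y) * C := ha_norm y s hy.1 hys hsIcc.2
    have hE2 : (1 : ℝ) + (y - x) * C ≤ Real.exp (C * (y - x)) := by
      have := Real.add_one_le_exp (C * (y - x)); nlinarith
    have hEmul : Real.exp (C * (y - x)) * Real.exp (C * (s - y)) = Real.exp (C * (s - x)) := by
      rw [← Real.exp_add]; ring_nf
    have hE1ge : (1 : ℝ) ≤ Real.exp (C * (s - x)) := by
      apply Real.one_le_exp; nlinarith
    have hyx0 : (0 : ℝ) ≤ y - x := by linarith
    have hsy0 : (0 : ℝ) ≤ s - y := by linarith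
    calc ‖(1 + a x y) * (P (fun r s => (1 : A) + a r s) (y :: l) - (1 + a y s))
            + a x y * a y s‖
        ≤ ‖(1 + a x y) * (P (fun r s => (1 : A) + a r s) (y :: l) - (1 + a y s))‖
            + ‖a x y * a y s‖ := norm_add_le _ _
      _ ≤ ‖(1 : A) + a x y‖ * ‖P (fun r s => (1 : A) + a r s) (y :: l) - (1 + a y s)‖
            + ‖a x y‖ * ‖a y s‖ := add_le_add (norm_mul_le _ _) (norm_mul_le _ _)
      _ ≤ (1 + (y - x) * C) * (C ^ 2 * μ * (s - y) * Real.exp (C * (s - y)))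
            + ((y - x) * C) * ((s - y) * C) := by
          apply add_le_add
          · apply mul_le_mul h1 ih (norm_nonneg _)
            nlinarith
          · apply mul_le_mul hxyn hysn (norm_nonneg _)
            nlinarith
      _ ≤ Real.exp (C * (y - x)) * (C ^ 2 * μ * (s - y) * Real.exp (C * (s - y)))
            + C ^ 2 * μ * (y - x) * Real.exp (C * (s - x)) := by
          apply add_le_add
          · apply mul_le_mul_of_nonneg_right hE2; positivity
          · nlinarith [mul_nonneg (mul_nonneg (mul_nonneg (sq_nonneg C) hμ) hyx0)
                (by linarith : (0:ℝ) ≤ Real.exp (C * (s - x)) - 1),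
              mul_nonneg (mul_nonneg hyx0 (sq_nonneg C)) (by linarith : (0:ℝ) ≤ μ - (s - y))]
      _ = C ^ 2 * μ * (s - y) * Real.exp (C * (s - x))
            + C ^ 2 * μ * (y - x) * Real.exp (C * (s - x)) := by
          rw [← hEmul]; ring
      _ = C ^ 2 * μ * (s - x) * Real.exp (C * (s - x)) := by ring


lemma getLast_congr {l l' : List ℝ} (h1 : l ≠ []) (h2 : l' ≠ []) (h : l = l') :
    l.getLast h1 = l'.getLast h2 := by subst h; rfl

lemma getLast_append_cons : ∀ (l : List ℝ) (y : ℝ) (t : List ℝ),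
    (l ++ y :: t).getLast (by simp) = (y :: t).getLast (by simp)
  | [], y, t => rfl
  | z :: l, y, t => by
    have h1 : (z :: l) ++ y :: t = z :: (l ++ y :: t) := by simp
    have h2 : ((z :: l) ++ y :: t).getLast (by simp) = (l ++ y :: t).getLast (by simp) :=
      (getLast_congr _ _ h1).trans (List.getLast_cons (by simp))
    exact h2.trans (getLast_append_cons l y t)

lemma lemB (hC : 0 < C) (hμ : 0 ≤ μ)
    (ha_norm : ∀ r s, R ≤ r → r ≤ s → s ≤ S → ‖a r s‖ ≤ (s - r) * C)
    (ha_add : ∀ r s t, R ≤ r → r < s → s < t → t ≤ S → a r t = a r s + a s t) :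
    ∀ (M L : List ℝ) (x s : ℝ),
      (x :: M).Pairwise (· < ·) → (x :: L).Pairwise (· < ·) →
      (∀ y ∈ x :: L, y ∈ Set.Icc R S) →
      (∀ y ∈ x :: M, y ∈ x :: L) →
      (x :: M).getLast (by simp) = s → (x :: L).getLast (by simp) = s →
      List.IsChain (fun p q => q - p ≤ μ) (x :: M) →
      ‖P (fun r s => (1 : A) + a r s) (x :: L) - P (fun r s => (1 : A) + a r s) (x :: M)‖ ≤
        C ^ 2 * μ * (s - x) * Real.exp (2 * C * (s - x))
  | [], L, x, s, hsM, hsL, hmemL, hsub, hlastM, hlastL, hgap => by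
    simp only [List.getLast_singleton] at hlastM
    subst hlastM
    cases L with
    | nil =>
      simp only [P_single, sub_self, norm_zero, sub_self, mul_zero, zero_mul]
      positivity
    | cons y L' =>
      exfalso
      have h1 : (x :: y :: L').getLast (by simp) = (y :: L').getLast (by simp) :=
        List.getLast_cons (by simp)
      have h2 : x < (y :: L').getLast (by simp) :=
        (List.pairwise_cons.1 hsL).1 _ (List.getLast_mem _)
      rw [h1] at hlastL
      rw [hlastL] at h2
      exact lt_irrefl _ h2
  | m :: M', L, x, s, hsM, hsL, hmemL, hsub, hlastM, hlastL, hgap => by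
    have hxm : x < m := (List.pairwise_cons.1 hsM).1 m (List.mem_cons_self)
    have hmL : m ∈ x :: L := hsub m (List.mem_cons_of_mem _ (List.mem_cons_self))
    obtain ⟨l₁, l₂, heq⟩ := List.append_of_mem hmL
    cases l₁ with
    | nil =>
      exfalso
      simp only [List.nil_append, List.cons.injEq] at heq
      exact absurd heq.1 (ne_of_lt hxm)
    | cons x L₁ =>
      rw [List.cons_append, List.cons.injEq] at heq
      obtain ⟨rfl, rfl⟩ := heq
      -- now L is literally L₁ ++ m :: l₂ and x = x
      have heq' : x :: (L₁ ++ m :: l₂) = (x :: L₁) ++ m :: l₂ := by simp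
      have hpair : List.Pairwise (· < ·) ((x :: L₁) ++ m :: l₂) := by rw [← heq']; exact hsL
      obtain ⟨hsW, hs2, hcross⟩ := List.pairwise_append.1 hpair
      have hlast2 : (m :: l₂).getLast (by simp) = s := by
        rw [← hlastL]
        exact ((getLast_append_cons (x :: L₁) m l₂).symm.trans
          (getLast_congr _ _ heq'.symm))
      have hms : m ≤ s := by
        rw [← hlast2]; exact head_le_getLast m l₂ hs2
      have hgap1 : m - x ≤ μ := (List.isChain_cons_cons.1 hgap).1
      have hgap' : List.IsChain (fun p q => q - p ≤ μ) (m :: M') := (List.isChain_cons_cons.1 hgap).2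
      have hlastM' : (m :: M').getLast (by simp) = s := by
        rw [← hlastM]; exact (List.getLast_cons (by simp)).symm
      -- the block B = x :: (L₁ ++ [m])
      have hsB : List.Pairwise (· < ·) ((x :: L₁) ++ [m]) := by
        apply List.pairwise_append.2
        exact ⟨hsW, List.pairwise_singleton _ m, fun p hp q hq => by
          rw [List.mem_singleton] at hq
          rw [hq]
          exact hcross p hp m (List.mem_cons_self)⟩
      have hBeq : (x :: L₁) ++ [m] = x :: (L₁ ++ [m]) := by simp
      have hlastB : (x :: (L₁ ++ [m])).getLast (by simp) = m :=
        (getLast_congr _ _ hBeq.symm).trans (getLast_append_cons (x :: L₁) m [])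
      have hmemB : ∀ y ∈ x :: (L₁ ++ [m]), y ∈ Set.Icc R S := by
        intro y hy
        rw [← hBeq] at hy
        rcases List.mem_append.1 hy with hy | hy
        · exact hmemL y (by rw [heq']; exact List.mem_append.2 (Or.inl hy))
        · rw [List.mem_singleton] at hy; subst hy
          exact hmemL _ hmL
      have hsB' : List.Pairwise (· < ·) (x :: (L₁ ++ [m])) := by rw [← hBeq]; exact hsB
      have bound1 := lemA hC hμ ha_norm ha_add (L₁ ++ [m]) x m hsB' hmemB hlastB hgap1
      -- tail product norm
      have hmem2 : ∀ y ∈ m :: l₂, y ∈ Set.Icc R S := by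
        intro y hy
        exact hmemL y (by rw [heq']; exact List.mem_append.2 (Or.inr hy))
      have bound2 := norm_P_le (a := a) hC ha_norm l₂ m hs2 hmem2
      rw [hlast2] at bound2
      -- IH
      have hsub' : ∀ y ∈ m :: M', y ∈ m :: l₂ := by
        intro y hy
        rcases List.mem_cons.1 hy with rfl | hy
        · exact List.mem_cons_self
        · have hmy : m < y := (List.pairwise_cons.1 (List.pairwise_cons.1 hsM).2).1 y hy
          have : y ∈ (x :: L₁) ++ m :: l₂ := by
            rw [← heq']
            exact hsub y (List.mem_cons_of_mem _ (List.mem_cons_of_mem _ hy))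
          rcases List.mem_append.1 this with hy' | hy'
          · exact absurd (hcross y hy' m (List.mem_cons_self)) (not_lt.2 hmy.le)
          · exact hy'
      have ih := lemB hC hμ ha_norm ha_add M' l₂ m s (List.pairwise_cons.1 hsM).2 hs2 hmem2
        hsub' hlastM' hlast2 hgap'
      -- algebra
      have hPL : P (fun r s => (1 : A) + a r s) (x :: (L₁ ++ m :: l₂)) =
          P (fun r s => (1 : A) + a r s) (x :: (L₁ ++ [m])) *
            P (fun r s => (1 : A) + a r s) (m :: l₂) := by
        rw [heq', P_append, hBeq]
      have hPM : P (fun r s => (1 : A) + a r s) (x :: m :: M') =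
          (1 + a x m) * P (fun r s => (1 : A) + a r s) (m :: M') := P_cons_cons _ _ _ _
      have key : P (fun r s => (1 : A) + a r s) (x :: (L₁ ++ m :: l₂)) -
          P (fun r s => (1 : A) + a r s) (x :: m :: M') =
          (P (fun r s => (1 : A) + a r s) (x :: (L₁ ++ [m])) - (1 + a x m)) *
            P (fun r s => (1 : A) + a r s) (m :: l₂)
          + (1 + a x m) *
            (P (fun r s => (1 : A) + a r s) (m :: l₂) -
              P (fun r s => (1 : A) + a r s) (m :: M')) := by
        rw [hPL, hPM]; noncomm_ring
      rw [key]
      have hxI : x ∈ Set.Icc R S := hmemL _ (List.mem_cons_self)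
      have hmI : m ∈ Set.Icc R S := hmemL _ hmL
      have h1 : ‖(1 : A) + a x m‖ ≤ 1 + (m - x) * C := by
        calc ‖(1 : A) + a x m‖ ≤ ‖(1 : A)‖ + ‖a x m‖ := norm_add_le _ _
          _ ≤ 1 + (m - x) * C := by
              rw [norm_one]; exact add_le_add_right (ha_norm x m hxI.1 hxm.le hmI.2) 1
      have hE2 : (1 : ℝ) + (m - x) * C ≤ Real.exp (C * (m - x)) := by
        have := Real.add_one_le_exp (C * (m - x)); nlinarith
      have hmx : (0 : ℝ) ≤ m - x := by linarith
      have hsm0 : (0 : ℝ) ≤ s - m := by linarith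
      have hexp1 : Real.exp (C * (m - x)) * Real.exp (C * (s - m)) ≤
          Real.exp (2 * C * (s - x)) := by
        rw [← Real.exp_add]
        apply Real.exp_le_exp.2
        nlinarith
      have hexp2 : Real.exp (C * (m - x)) * Real.exp (2 * C * (s - m)) ≤
          Real.exp (2 * C * (s - x)) := by
        rw [← Real.exp_add]
        apply Real.exp_le_exp.2
        nlinarith
      calc ‖(P (fun r s => (1 : A) + a r s) (x :: (L₁ ++ [m])) - (1 + a x m)) *
            P (fun r s => (1 : A) + a r s) (m :: l₂)
          + (1 + a x m) *
            (P (fun r s => (1 : A) + a r s) (m :: l₂) -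
              P (fun r s => (1 : A) + a r s) (m :: M'))‖
          ≤ ‖P (fun r s => (1 : A) + a r s) (x :: (L₁ ++ [m])) - (1 + a x m)‖ *
              ‖P (fun r s => (1 : A) + a r s) (m :: l₂)‖
            + ‖(1 : A) + a x m‖ *
              ‖P (fun r s => (1 : A) + a r s) (m :: l₂) -
                P (fun r s => (1 : A) + a r s) (m :: M')‖ :=
          le_trans (norm_add_le _ _) (add_le_add (norm_mul_le _ _) (norm_mul_le _ _))
        _ ≤ (C ^ 2 * μ * (m - x) * Real.exp (C * (m - x))) * Real.exp (C * (s - m))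
            + Real.exp (C * (m - x)) * (C ^ 2 * μ * (s - m) * Real.exp (2 * C * (s - m))) := by
            apply add_le_add
            · exact mul_le_mul bound1 bound2 (norm_nonneg _) (by positivity)
            · exact mul_le_mul (le_trans h1 hE2) ih (norm_nonneg _) (by positivity)
        _ ≤ (C ^ 2 * μ * (m - x)) * Real.exp (2 * C * (s - x))
            + (C ^ 2 * μ * (s - m)) * Real.exp (2 * C * (s - x)) := by
            apply add_le_add
            · calc (C ^ 2 * μ * (m - x) * Real.exp (C * (m - x))) * Real.exp (C * (s - m))
                  = (C ^ 2 * μ * (m - x)) *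
                      (Real.exp (C * (m - x)) * Real.exp (C * (s - m))) := by ring
                _ ≤ (C ^ 2 * μ * (m - x)) * Real.exp (2 * C * (s - x)) := by
                    apply mul_le_mul_of_nonneg_left hexp1; positivity
            · calc Real.exp (C * (m - x)) * (C ^ 2 * μ * (s - m) * Real.exp (2 * C * (s - m)))
                  = (C ^ 2 * μ * (s - m)) *
                      (Real.exp (C * (m - x)) * Real.exp (2 * C * (s - m))) := by ring
                _ ≤ (C ^ 2 * μ * (s - m)) * Real.exp (2 * C * (s - x)) := by
                    apply mul_le_mul_of_nonneg_left hexp2; positivity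
        _ = C ^ 2 * μ * (s - x) * Real.exp (2 * C * (s - x)) := by ring

lemma partitionProd_eq_P (g : ℝ → ℝ → A) (γ : Finset ℝ) :
    partitionProd g γ = P g (γ.sort (· ≤ ·)) := rfl

lemma sort_head {R S : ℝ} (γ : Finset ℝ) (hγ : IsPartition R S γ) :
    ∃ l : List ℝ, γ.sort (· ≤ ·) = R :: l := by
  obtain ⟨hR, hS, hbound⟩ := hγ
  have hmem : R ∈ γ.sort (· ≤ ·) := (Finset.mem_sort _).2 hR
  cases h : γ.sort (· ≤ ·) with
  | nil => rw [h] at hmem; simp at hmem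
  | cons y l =>
    have hsort : List.Pairwise (· < ·) (y :: l) := h ▸ (Finset.sortedLT_sort γ).pairwise
    have hy : y ∈ γ := (Finset.mem_sort _).1 (h ▸ List.mem_cons_self)
    rw [h] at hmem
    rcases List.mem_cons.1 hmem with rfl | hmem'
    · exact ⟨l, rfl⟩
    · exfalso
      have := (List.pairwise_cons.1 hsort).1 R hmem'
      linarith [(hbound y hy).1]

lemma sort_getLast {R S : ℝ} (γ : Finset ℝ) (hγ : IsPartition R S γ)
    (h : γ.sort (· ≤ ·) ≠ []) : (γ.sort (· ≤ ·)).getLast h = S := by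
  obtain ⟨hR, hS, hbound⟩ := hγ
  have h1 : (γ.sort (· ≤ ·)).getLast h ∈ γ := (Finset.mem_sort _).1 (List.getLast_mem h)
  have h2 : S ≤ (γ.sort (· ≤ ·)).getLast h :=
    mem_le_getLast _ h ((Finset.sortedLT_sort γ).pairwise) S ((Finset.mem_sort _).2 hS)
  linarith [(hbound _ h1).2]

lemma compare_le (hC : 0 < C) (hμ : 0 ≤ μ) (hRS : R ≤ S)
    (ha_norm : ∀ r s, R ≤ r → r ≤ s → s ≤ S → ‖a r s‖ ≤ (s - r) * C)
    (ha_add : ∀ r s t, R ≤ r → r < s → s < t → t ≤ S → a r t = a r s + a s t)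
    (α β : Finset ℝ) (hα : IsPartition R S α) (hβ : IsPartition R S β) (hsub : α ⊆ β)
    (hgap : List.IsChain (fun p q => q - p ≤ μ) (α.sort (· ≤ ·))) :
    ‖partitionProd (fun r s => (1 : A) + a r s) β -
        partitionProd (fun r s => (1 : A) + a r s) α‖ ≤
      C ^ 2 * μ * (S - R) * Real.exp (2 * C * (S - R)) := by
  obtain ⟨M, hM⟩ := sort_head α hα
  obtain ⟨L, hL⟩ := sort_head β hβ
  rw [partitionProd_eq_P, partitionProd_eq_P, hM, hL]
  apply lemB hC hμ ha_norm ha_add M L R S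
  · exact hM ▸ (Finset.sortedLT_sort α).pairwise
  · exact hL ▸ (Finset.sortedLT_sort β).pairwise
  · intro y hy
    have : y ∈ β := (Finset.mem_sort _).1 (hL ▸ hy)
    exact ⟨(hβ.2.2 y this).1, (hβ.2.2 y this).2⟩
  · intro y hy
    have : y ∈ α := (Finset.mem_sort _).1 (hM ▸ hy)
    rw [← hL]
    exact (Finset.mem_sort _).2 (hsub this)
  · exact (getLast_congr (by simp) (by simp [hM]) hM.symm).trans (sort_getLast α hα _)
  · exact (getLast_congr (by simp) (by simp [hL]) hL.symm).trans (sort_getLast β hβ _)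
  · exact hM ▸ hgap

noncomputable def unifList (R S : ℝ) (n : ℕ) : List ℝ :=
  (List.range (n + 2)).map fun i : ℕ => R + (i : ℝ) * ((S - R) / (n + 1))

noncomputable def unif (R S : ℝ) (n : ℕ) : Finset ℝ := (unifList R S n).toFinset

lemma unifList_sorted {R S : ℝ} (hRS : R < S) (n : ℕ) :
    (unifList R S n).Pairwise (· < ·) := by
  have hpos : (0:ℝ) < (S - R) / (n + 1) := by
    apply div_pos (by linarith)
    positivity
  simp only [unifList]
  refine List.Pairwise.map _ ?_ ((List.pairwise_lt_range (n := n + 2)))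
  intro i j hij
  have hij' : (i:ℝ) < j := by exact_mod_cast hij
  nlinarith

lemma sort_unif {R S : ℝ} (hRS : R < S) (n : ℕ) :
    (unif R S n).sort (· ≤ ·) = unifList R S n := by
  apply (List.toFinset_sort _ ((unifList_sorted hRS n).imp ne_of_lt)).2
  exact (unifList_sorted hRS n).imp le_of_lt

lemma unifList_chain {R S : ℝ} (n : ℕ) :
    List.IsChain (fun p q => q - p ≤ (S - R) / (n + 1)) (unifList R S n) := by
  simp only [unifList]
  rw [List.isChain_map]
  have : n + 2 = Nat.succ (n + 1) := rfl
  rw [this, List.isChain_range_succ]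
  intro i _
  have : ((i : ℝ) + 1) = ((Nat.succ i : ℕ) : ℝ) := by push_cast; ring
  rw [← this]
  ring_nf
  linarith

lemma unif_partition {R S : ℝ} (hRS : R < S) (n : ℕ) :
    IsPartition R S (unif R S n) := by
  have hn1 : ((n : ℝ) + 1) ≠ 0 := by positivity
  have hpos : (0:ℝ) ≤ (S - R) / (n + 1) := by
    apply div_nonneg (by linarith); positivity
  refine ⟨?_, ?_, ?_⟩
  · simp only [unif, unifList, List.mem_toFinset, List.mem_map]
    exact ⟨0, List.mem_range.2 (by omega), by push_cast; ring⟩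
  · simp only [unif, unifList, List.mem_toFinset, List.mem_map]
    refine ⟨n + 1, List.mem_range.2 (by omega), ?_⟩
    push_cast
    field_simp
    ring
  · intro t ht
    simp only [unif, unifList, List.mem_toFinset, List.mem_map] at ht
    obtain ⟨i, hi, rfl⟩ := ht
    rw [List.mem_range] at hi
    have hi' : (i : ℝ) ≤ (n : ℝ) + 1 := by
      have : i ≤ n + 1 := by omega
      exact_mod_cast this
    constructor
    · nlinarith [mul_nonneg (by positivity : (0:ℝ) ≤ (i:ℝ)) hpos]
    · have h1 : (i : ℝ) * ((S - R) / (n + 1)) ≤ ((n:ℝ) + 1) * ((S - R) / (n + 1)) :=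
        mul_le_mul_of_nonneg_right hi' hpos
      have h2 : ((n:ℝ) + 1) * ((S - R) / (n + 1)) = S - R := by field_simp
      linarith

end Main

end Stmt8

/-- in a Banach algebra the net of ordered products `Θ_α` over partitions
of `[R, S]` converges. -/
theorem stmt_8 {A : Type*} [NormedRing A] [NormOneClass A] [NormedAlgebra ℂ A]
    [CompleteSpace A]
    (R S C : ℝ) (hR : 0 ≤ R) (hRS : R < S) (hC : 0 < C)
    (a : ℝ → ℝ → A)
    (ha_norm : ∀ r s, R ≤ r → r ≤ s → s ≤ S → ‖a r s‖ ≤ (s - r) * C)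
    (ha_add : ∀ r s t, R ≤ r → r < s → s < t → t ≤ S → a r t = a r s + a s t) :
    ∃ U : A, IsNetLimit (fun r s => (1 : A) + a r s) R S U := by
  classical
  set g : ℝ → ℝ → A := fun r s => (1 : A) + a r s with hg
  set K : ℝ := C ^ 2 * (S - R) ^ 2 * Real.exp (2 * C * (S - R)) with hK
  have hSR : (0:ℝ) < S - R := by linarith
  have hK0 : 0 < K := by rw [hK]; positivity
  have key : ∀ n : ℕ, ∀ β : Finset ℝ, IsPartition R S β → Stmt8.unif R S n ⊆ β →
      ‖partitionProd g β - partitionProd g (Stmt8.unif R S n)‖ ≤ K / (n + 1) := by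
    intro n β hβ hsub
    have hμ : (0:ℝ) ≤ (S - R) / (n + 1) := by positivity
    have h := Stmt8.compare_le (μ := (S - R) / (n + 1)) hC hμ hRS.le ha_norm ha_add
      (Stmt8.unif R S n) β (Stmt8.unif_partition hRS n) hβ hsub
      (by rw [Stmt8.sort_unif hRS]; exact Stmt8.unifList_chain n)
    calc ‖partitionProd g β - partitionProd g (Stmt8.unif R S n)‖
        ≤ C ^ 2 * ((S - R) / (n + 1)) * (S - R) * Real.exp (2 * C * (S - R)) := h
      _ = K / (n + 1) := by rw [hK]; ring
  set u : ℕ → A := fun n => partitionProd g (Stmt8.unif R S n) with hu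
  have hdist : ∀ n m : ℕ, ‖u n - u m‖ ≤ K / (n + 1) + K / (m + 1) := by
    intro n m
    have hun : IsPartition R S (Stmt8.unif R S n ∪ Stmt8.unif R S m) := by
      obtain ⟨h1, h2, h3⟩ := Stmt8.unif_partition (R := R) (S := S) hRS n
      obtain ⟨h1', h2', h3'⟩ := Stmt8.unif_partition (R := R) (S := S) hRS m
      refine ⟨Finset.mem_union_left _ h1, Finset.mem_union_left _ h2, ?_⟩
      intro t ht
      rcases Finset.mem_union.1 ht with ht | ht
      · exact h3 t ht
      · exact h3' t ht
    have e1 := key n _ hun Finset.subset_union_left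
    have e2 := key m _ hun Finset.subset_union_right
    calc ‖u n - u m‖
        ≤ ‖partitionProd g (Stmt8.unif R S n ∪ Stmt8.unif R S m) - u n‖
          + ‖partitionProd g (Stmt8.unif R S n ∪ Stmt8.unif R S m) - u m‖ := by
          rw [← norm_neg (partitionProd g (Stmt8.unif R S n ∪ Stmt8.unif R S m) - u n)]
          have : u n - u m = -(partitionProd g (Stmt8.unif R S n ∪ Stmt8.unif R S m) - u n)
              + (partitionProd g (Stmt8.unif R S n ∪ Stmt8.unif R S m) - u m) := by abel
          rw [this]
          exact norm_add_le _ _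
      _ ≤ K / (n + 1) + K / (m + 1) := add_le_add e1 e2
  have hcauchy : CauchySeq u := by
    apply cauchySeq_of_le_tendsto_0 (fun N : ℕ => 2 * K / (N + 1))
    · intro n m N hn hm
      rw [dist_eq_norm]
      have h1 : K / ((n:ℝ) + 1) ≤ K / ((N:ℝ) + 1) := by
        apply div_le_div_of_nonneg_left hK0.le (by positivity)
        have : (N:ℝ) ≤ n := by exact_mod_cast hn
        linarith
      have h2 : K / ((m:ℝ) + 1) ≤ K / ((N:ℝ) + 1) := by
        apply div_le_div_of_nonneg_left hK0.le (by positivity)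
        have : (N:ℝ) ≤ m := by exact_mod_cast hm
        linarith
      calc ‖u n - u m‖ ≤ K / (n + 1) + K / (m + 1) := hdist n m
        _ ≤ K / (N + 1) + K / (N + 1) := add_le_add h1 h2
        _ = 2 * K / (N + 1) := by ring
    · have := tendsto_one_div_add_atTop_nhds_zero_nat.const_mul (2 * K)
      simpa [div_eq_mul_inv, mul_assoc, mul_comm, mul_left_comm] using this
  obtain ⟨U, hU⟩ := cauchySeq_tendsto_of_complete hcauchy
  have hlim : ∀ n : ℕ, ‖u n - U‖ ≤ 2 * K / (n + 1) := by
    intro n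
    have h1 : Filter.Tendsto (fun m => ‖u n - u m‖) Filter.atTop (nhds ‖u n - U‖) :=
      (Filter.Tendsto.sub tendsto_const_nhds hU).norm
    apply le_of_tendsto h1
    filter_upwards [Filter.eventually_ge_atTop n] with m hm
    have h2 : K / ((m:ℝ) + 1) ≤ K / ((n:ℝ) + 1) := by
      apply div_le_div_of_nonneg_left hK0.le (by positivity)
      have : (n:ℝ) ≤ m := by exact_mod_cast hm
      linarith
    calc ‖u n - u m‖ ≤ K / (n + 1) + K / (m + 1) := hdist n m
      _ ≤ K / (n + 1) + K / (n + 1) := by linarith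
      _ = 2 * K / (n + 1) := by ring
  refine ⟨U, ?_⟩
  intro ε hε
  obtain ⟨n, hn⟩ : ∃ n : ℕ, 3 * K / ((n:ℝ) + 1) < ε := by
    obtain ⟨n, hn⟩ := exists_nat_gt (3 * K / ε)
    refine ⟨n, ?_⟩
    rw [div_lt_iff₀ (by positivity)]
    rw [div_lt_iff₀ hε] at hn
    nlinarith
  refine ⟨Stmt8.unif R S n, Stmt8.unif_partition hRS n, ?_⟩
  intro α hα hsubα
  have h1 := key n α hα hsubα
  calc ‖partitionProd g α - U‖
      = ‖(partitionProd g α - u n) + (u n - U)‖ := by abel_nf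
    _ ≤ ‖partitionProd g α - u n‖ + ‖u n - U‖ := norm_add_le _ _
    _ ≤ K / (n + 1) + 2 * K / (n + 1) := add_le_add h1 (hlim n)
    _ = 3 * K / ((n:ℝ) + 1) := by ring
    _ < ε := hn
end

section
/- Let A be a complete normed unital algebra (Banach algebra) with submultiplicative norm and ‖1‖ = 1, C > 0, and let (a_{r,s})_{0 ≤ r ≤ s} be a family of elements of A such that ‖a_{r,s}‖ ≤ (s − r)·C for all 0 ≤ r ≤ s, and a_{r,t} = a_{r,s} + a_{s,t} whenever 0 ≤ r < s < t. Set g_{r,s} := 1 + a_{r,s} and, for 0 ≤ R < S, let U_{R,S} ∈ A denote the limit of the net (Θ_α)_{α ∈ P[R,S]}, where Θ_α is the ordered product of the g's over consecutive points of the partition α. Then for all 0 ≤ r < s < t one has U_{r,s}·U_{s,t} = U_{r,t}. -/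
/- ### Auxiliary lemmas -/

theorem zc_split' {β : Type*} (x : β) (l₂ : List β) : ∀ l₁ : List β,
    (l₁ ++ x :: l₂).zip (l₁ ++ x :: l₂).tail =
      (l₁ ++ [x]).zip (l₁ ++ [x]).tail ++ (x :: l₂).zip l₂ := by
  intro l₁
  induction l₁ with
  | nil => simp
  | cons a l ih =>
    cases l with
    | nil => simp
    | cons b l' => simpa using ih

instance : IsAntisymm ℝ (· < ·) := ⟨fun _ _ h h' => absurd h' (lt_asymm h)⟩

theorem sort_filter' (α : Finset ℝ) (p : ℝ → Prop) [DecidablePred p] :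
    (α.filter p).sort (· ≤ ·) = (α.sort (· ≤ ·)).filter p := by
  refine List.Perm.eq_of_pairwise' (Finset.pairwise_sort _ _)
    ((Finset.pairwise_sort α (· ≤ ·)).filter _) ?_
  rw [← Multiset.coe_eq_coe, ← Multiset.filter_coe, Finset.sort_eq, Finset.sort_eq,
    Finset.filter_val]

theorem partitionProd_split {A : Type*} [Ring A] (g : ℝ → ℝ → A) (α : Finset ℝ) (s : ℝ)
    (hs : s ∈ α) :
    partitionProd g α =
      partitionProd g (α.filter (· ≤ s)) * partitionProd g (α.filter (s ≤ ·)) := by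
  obtain ⟨L₁, L₂, hL⟩ := List.append_of_mem ((Finset.mem_sort (· ≤ ·)).mpr hs)
  have hsort : List.Pairwise (· < ·) (L₁ ++ s :: L₂) := hL ▸ (Finset.sortedLT_sort α).pairwise
  have hsort' := List.pairwise_append.mp hsort
  have h₁ : ∀ x ∈ L₁, x < s := fun x hx => hsort'.2.2 x hx s (List.mem_cons_self (a := s) (l := L₂))
  have h₂ : ∀ x ∈ L₂, s < x := fun x hx => (List.pairwise_cons.mp hsort'.2.1).1 x hx
  have e₁ : (α.filter (· ≤ s)).sort (· ≤ ·) = L₁ ++ [s] := by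
    rw [sort_filter', hL, List.filter_append]
    have : L₁.filter (fun x => decide (x ≤ s)) = L₁ :=
      List.filter_eq_self.mpr fun x hx => decide_eq_true (h₁ x hx).le
    rw [this, List.filter_cons]
    have h0 : L₂.filter (fun x => decide (x ≤ s)) = [] :=
      List.filter_eq_nil_iff.mpr fun x hx => by simp [not_le.mpr (h₂ x hx)]
    simp [h0]
  have e₂ : (α.filter (s ≤ ·)).sort (· ≤ ·) = s :: L₂ := by
    rw [sort_filter', hL, List.filter_append]
    have : L₁.filter (fun x => decide (s ≤ x)) = [] :=
      List.filter_eq_nil_iff.mpr fun x hx => by simp [not_le.mpr (h₁ x hx)]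
    rw [this, List.nil_append, List.filter_cons]
    have h0 : L₂.filter (fun x => decide (s ≤ x)) = L₂ :=
      List.filter_eq_self.mpr fun x hx => decide_eq_true (h₂ x hx).le
    simp [h0]
  unfold partitionProd consecPairs
  rw [hL, e₁, e₂, zc_split' s L₂ L₁]
  simp [List.map_append, List.prod_append]

theorem netLimit_unique {A : Type*} [NormedRing A] (g : ℝ → ℝ → A) (r s : ℝ) (u v : A)
    (hu : IsNetLimit g r s u) (hv : IsNetLimit g r s v) : u = v := by
  have key : ∀ ε > (0 : ℝ), ‖u - v‖ < 2 * ε := by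
    intro ε hε
    obtain ⟨γ₁, hγ₁, H₁⟩ := hu ε hε
    obtain ⟨γ₂, hγ₂, H₂⟩ := hv ε hε
    have hp : IsPartition r s (γ₁ ∪ γ₂) := by
      refine ⟨Finset.mem_union_left _ hγ₁.1, Finset.mem_union_left _ hγ₁.2.1, ?_⟩
      intro x hx
      rcases Finset.mem_union.mp hx with h | h
      · exact hγ₁.2.2 x h
      · exact hγ₂.2.2 x h
    have e₁ := H₁ (γ₁ ∪ γ₂) hp Finset.subset_union_left
    have e₂ := H₂ (γ₁ ∪ γ₂) hp Finset.subset_union_right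
    calc ‖u - v‖ = ‖(partitionProd g (γ₁ ∪ γ₂) - v) - (partitionProd g (γ₁ ∪ γ₂) - u)‖ := by
          congr 1; abel
      _ ≤ ‖partitionProd g (γ₁ ∪ γ₂) - v‖ + ‖partitionProd g (γ₁ ∪ γ₂) - u‖ := norm_sub_le _ _
      _ < ε + ε := add_lt_add e₂ e₁
      _ = 2 * ε := by ring
  by_contra h
  have hpos : 0 < ‖u - v‖ := norm_pos_iff.mpr (sub_ne_zero.mpr h)
  have := key (‖u - v‖ / 2) (by linarith)
  linarith

/-- multiplicativity (evolution property) `U_{r,s} · U_{s,t} = U_{r,t}` of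
the limits of the nets of ordered products. -/
theorem stmt_9 {A : Type*} [NormedRing A] [NormOneClass A] [NormedAlgebra ℂ A]
    [CompleteSpace A]
    (C : ℝ) (hC : 0 < C)
    (a : ℝ → ℝ → A)
    (ha_norm : ∀ r s, 0 ≤ r → r ≤ s → ‖a r s‖ ≤ (s - r) * C)
    (ha_add : ∀ r s t, 0 ≤ r → r < s → s < t → a r t = a r s + a s t)
    (U : ℝ → ℝ → A)
    (hU : ∀ r s, 0 ≤ r → r < s → IsNetLimit (fun p q => (1 : A) + a p q) r s (U r s)) :
    ∀ r s t, 0 ≤ r → r < s → s < t → U r s * U s t = U r t := by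
  intro r s t hr hrs hst
  set g : ℝ → ℝ → A := fun p q => (1 : A) + a p q with hg
  have hrt : r < t := hrs.trans hst
  have hs0 : 0 ≤ s := hr.trans hrs.le
  have h1 := hU r s hr hrs
  have h2 := hU s t hs0 hst
  have h3 := hU r t hr hrt
  set u₁ := U r s
  set u₂ := U s t
  have hlim : IsNetLimit g r t (u₁ * u₂) := by
    intro ε hε
    set S : ℝ := ‖u₁‖ + ‖u₂‖ with hS
    have hS0 : 0 ≤ S := by positivity
    set δ : ℝ := min 1 (ε / (S + 2)) with hδ
    have hδpos : 0 < δ := lt_min one_pos (by positivity)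
    obtain ⟨γ₁, hγ₁, H₁⟩ := h1 δ hδpos
    obtain ⟨γ₂, hγ₂, H₂⟩ := h2 δ hδpos
    have hγp : IsPartition r t (γ₁ ∪ γ₂) := by
      refine ⟨Finset.mem_union_left _ hγ₁.1, Finset.mem_union_right _ hγ₂.2.1, ?_⟩
      intro x hx
      rcases Finset.mem_union.mp hx with h | h
      · exact ⟨(hγ₁.2.2 x h).1, (hγ₁.2.2 x h).2.trans hst.le⟩
      · exact ⟨hrs.le.trans (hγ₂.2.2 x h).1, (hγ₂.2.2 x h).2⟩
    refine ⟨γ₁ ∪ γ₂, hγp, ?_⟩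
    intro α hα hsub
    have hsα : s ∈ α := hsub (Finset.mem_union_left _ hγ₁.2.1)
    set α₁ := α.filter (· ≤ s) with hα₁
    set α₂ := α.filter (s ≤ ·) with hα₂
    have hp₁ : IsPartition r s α₁ := by
      refine ⟨Finset.mem_filter.mpr ⟨hα.1, hrs.le⟩, Finset.mem_filter.mpr ⟨hsα, le_refl s⟩, ?_⟩
      intro x hx
      obtain ⟨hxα, hxs⟩ := Finset.mem_filter.mp hx
      exact ⟨(hα.2.2 x hxα).1, hxs⟩
    have hp₂ : IsPartition s t α₂ := by
      refine ⟨Finset.mem_filter.mpr ⟨hsα, le_refl s⟩, Finset.mem_filter.mpr ⟨hα.2.1, hst.le⟩, ?_⟩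
      intro x hx
      obtain ⟨hxα, hxs⟩ := Finset.mem_filter.mp hx
      exact ⟨hxs, (hα.2.2 x hxα).2⟩
    have hsub₁ : γ₁ ⊆ α₁ := by
      intro x hx
      exact Finset.mem_filter.mpr ⟨hsub (Finset.mem_union_left _ hx), (hγ₁.2.2 x hx).2⟩
    have hsub₂ : γ₂ ⊆ α₂ := by
      intro x hx
      exact Finset.mem_filter.mpr ⟨hsub (Finset.mem_union_right _ hx), (hγ₂.2.2 x hx).1⟩
    have e₁ : ‖partitionProd g α₁ - u₁‖ < δ := H₁ α₁ hp₁ hsub₁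
    have e₂ : ‖partitionProd g α₂ - u₂‖ < δ := H₂ α₂ hp₂ hsub₂
    have hsplit := partitionProd_split g α s hsα
    rw [hsplit]
    set P₁ := partitionProd g α₁
    set P₂ := partitionProd g α₂
    have hP₁ : ‖P₁‖ ≤ ‖u₁‖ + 1 := by
      calc ‖P₁‖ ≤ ‖P₁ - u₁‖ + ‖u₁‖ := by
            simpa using norm_add_le (P₁ - u₁) u₁
        _ ≤ ‖u₁‖ + 1 := by
            have := min_le_left (1 : ℝ) (ε / (S + 2))
            linarith [e₁.le.trans this]
    have key : ‖P₁ * P₂ - u₁ * u₂‖ ≤ (‖u₁‖ + 1) * δ + δ * ‖u₂‖ := by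
      calc ‖P₁ * P₂ - u₁ * u₂‖ = ‖P₁ * (P₂ - u₂) + (P₁ - u₁) * u₂‖ := by congr 1; noncomm_ring
        _ ≤ ‖P₁ * (P₂ - u₂)‖ + ‖(P₁ - u₁) * u₂‖ := norm_add_le _ _
        _ ≤ ‖P₁‖ * ‖P₂ - u₂‖ + ‖P₁ - u₁‖ * ‖u₂‖ :=
            add_le_add (norm_mul_le _ _) (norm_mul_le _ _)
        _ ≤ (‖u₁‖ + 1) * δ + δ * ‖u₂‖ :=
            add_le_add (mul_le_mul hP₁ e₂.le (norm_nonneg _) (by positivity))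
              (mul_le_mul_of_nonneg_right e₁.le (norm_nonneg _))
    have hδ2 : δ ≤ ε / (S + 2) := min_le_right _ _
    have : (‖u₁‖ + 1) * δ + δ * ‖u₂‖ < ε := by
      have h1' : (‖u₁‖ + 1) * δ + δ * ‖u₂‖ = (S + 1) * δ := by rw [hS]; ring
      rw [h1']
      have hS2 : (0:ℝ) < S + 2 := by linarith
      have : (S + 1) * δ ≤ (S + 1) * (ε / (S + 2)) := by
        apply mul_le_mul_of_nonneg_left hδ2 (by linarith)
      calc (S + 1) * δ ≤ (S + 1) * (ε / (S + 2)) := this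
        _ < ε := by
            rw [mul_comm, div_mul_eq_mul_div, div_lt_iff₀ hS2]
            nlinarith
    linarith [key]
  exact netLimit_unique g r t (u₁ * u₂) (U r t) hlim h3
end

section
/- Let A be a complete normed unital algebra (Banach algebra) with submultiplicative norm and ‖1‖ = 1, C > 0, and let (a_{r,s})_{0 ≤ r ≤ s} be a family of elements of A such that ‖a_{r,s}‖ ≤ (s − r)·C for all r ≤ s and a_{r,t} = a_{r,s} + a_{s,t} whenever r < s < t. Set g_{r,s} := 1 + a_{r,s} and let U_{r,s} denote the limit of the net of ordered products Θ_α over partitions α of [r,s]. Then ‖U_{r,s} − 1‖ ≤ exp(C·(s − r)) − 1 for all r < s; in particular, for every fixed r ≥ 0, U_{r,s} converges in norm to the unit 1 of A as s decreases to r. -/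
lemma teleSum : ∀ (l : List ℝ) (x : ℝ),
    (((x :: l).zip l).map fun p => p.2 - p.1).sum = l.getLastD x - x
  | [], x => by simp
  | y :: t, x => by
    simp only [List.zip_cons_cons, List.map_cons, List.sum_cons, List.getLastD_cons]
    rw [teleSum t y]; ring

lemma sorted_zip_le : ∀ (l : List ℝ), l.Pairwise (· ≤ ·) →
    ∀ p ∈ l.zip l.tail, p.1 ≤ p.2
  | [], _, p, hp => by simp at hp
  | [x], _, p, hp => by simp at hp
  | x :: y :: t, h, p, hp => by
    simp only [List.tail_cons, List.zip_cons_cons, List.mem_cons] at hp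
    rcases hp with rfl | hp
    · exact (List.pairwise_cons.mp h).1 y (by simp)
    · exact sorted_zip_le (y :: t) (List.pairwise_cons.mp h).2 p hp

lemma sorted_le_getLastD : ∀ (l : List ℝ) (x : ℝ), (x :: l).Pairwise (· ≤ ·) →
    ∀ y ∈ x :: l, y ≤ l.getLastD x
  | [], x, _, y, hy => by simp_all
  | z :: t, x, h, y, hy => by
    rw [List.getLastD_cons]
    rcases List.mem_cons.mp hy with rfl | hy
    · calc y ≤ z := (List.pairwise_cons.mp h).1 z (by simp)
        _ ≤ t.getLastD z := sorted_le_getLastD t z (List.pairwise_cons.mp h).2 z (by simp)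
    · exact sorted_le_getLastD t z (List.pairwise_cons.mp h).2 y hy

lemma prod_one_add_sub_one_le {A : Type*} [NormedRing A] [NormOneClass A] (xs : List A) :
    ‖(xs.map fun x => (1 : A) + x).prod - 1‖ ≤ Real.exp ((xs.map fun x => ‖x‖).sum) - 1 := by
  induction xs with
  | nil => simp
  | cons x t ih =>
    simp only [List.map_cons, List.prod_cons, List.sum_cons]
    set P := (t.map fun x => (1:A) + x).prod with hPdef
    set S := (t.map fun x => ‖x‖).sum with hSdef
    have hS : 0 ≤ S := List.sum_nonneg (by simp only [List.mem_map]; rintro _ ⟨y, -, rfl⟩; positivity)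
    have hE1 : (1:ℝ) ≤ Real.exp S := Real.one_le_exp hS
    have hP : ‖P‖ ≤ ‖P - 1‖ + 1 := by
      calc ‖P‖ = ‖(P - 1) + 1‖ := by rw [sub_add_cancel]
        _ ≤ ‖P - 1‖ + ‖(1:A)‖ := norm_add_le _ _
        _ = ‖P - 1‖ + 1 := by rw [norm_one]
    have key : (1 + x) * P - 1 = (P - 1) + x * P := by noncomm_ring
    have hxe : 1 + ‖x‖ ≤ Real.exp ‖x‖ := by linarith [Real.add_one_le_exp ‖x‖]
    calc ‖(1 + x) * P - 1‖ = ‖(P - 1) + x * P‖ := by rw [key]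
      _ ≤ ‖P - 1‖ + ‖x‖ * ‖P‖ := (norm_add_le _ _).trans (by gcongr; exact norm_mul_le _ _)
      _ ≤ (Real.exp S - 1) + ‖x‖ * Real.exp S := by
          gcongr
          exact hP.trans (by linarith)
      _ ≤ Real.exp (‖x‖ + S) - 1 := by
          rw [Real.exp_add]
          nlinarith [norm_nonneg x, Real.exp_pos S]

lemma sum_gaps (l : List ℝ) (hs : l.Pairwise (· ≤ ·)) (r s : ℝ)
    (hrl : r ∈ l) (hsl : s ∈ l) (hmem' : ∀ x ∈ l, r ≤ x ∧ x ≤ s) :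
    ((l.zip l.tail).map fun p => p.2 - p.1).sum = s - r := by
  cases l with
  | nil => simp at hrl
  | cons h t =>
    have hhr : h = r := by
      refine le_antisymm ?_ (hmem' h (by simp)).1
      rcases List.mem_cons.mp hrl with rfl | hm
      · exact le_refl _
      · exact (List.pairwise_cons.mp hs).1 r hm
    have hLs : t.getLastD h = s := by
      refine le_antisymm (hmem' _ (List.getLastD_mem_cons (l := t) (a := h))).2 ?_
      exact sorted_le_getLastD t h hs s hsl
    rw [List.tail_cons, teleSum, hLs, hhr]

lemma partition_bound {A : Type*} [NormedRing A] [NormOneClass A]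
    (C : ℝ) (a : ℝ → ℝ → A)
    (ha_norm : ∀ r s, 0 ≤ r → r ≤ s → ‖a r s‖ ≤ (s - r) * C)
    (r s : ℝ) (hr : 0 ≤ r)
    (α : Finset ℝ) (hα : IsPartition r s α) :
    ‖partitionProd (fun p q => (1:A) + a p q) α - 1‖ ≤ Real.exp (C * (s - r)) - 1 := by
  obtain ⟨hrα, hsα, hmem⟩ := hα
  set l := α.sort (· ≤ ·) with hl
  have hsorted : l.Pairwise (· ≤ ·) := α.pairwise_sort _
  have hmem' : ∀ x ∈ l, r ≤ x ∧ x ≤ s := fun x hx =>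
    hmem x (by rwa [hl, Finset.mem_sort] at hx)
  have hrl : r ∈ l := by rw [hl, Finset.mem_sort]; exact hrα
  have hsl : s ∈ l := by rw [hl, Finset.mem_sort]; exact hsα
  have hprod : partitionProd (fun p q => (1:A) + a p q) α
      = (((l.zip l.tail).map fun p => a p.1 p.2).map fun x => (1:A) + x).prod := by
    simp only [partitionProd, consecPairs, List.map_map]
    rfl
  rw [hprod]
  refine (prod_one_add_sub_one_le _).trans ?_
  have hsum : ((((l.zip l.tail).map fun p => a p.1 p.2).map fun x => ‖x‖).sum) ≤ C * (s - r) := by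
    rw [List.map_map]
    have h1 : ∀ p ∈ l.zip l.tail, ((fun x => ‖x‖) ∘ fun p : ℝ × ℝ => a p.1 p.2) p
        ≤ (fun p : ℝ × ℝ => (p.2 - p.1) * C) p := by
      intro p hp
      have h1m : p.1 ∈ l := (List.of_mem_zip hp).1
      exact ha_norm p.1 p.2 (hr.trans (hmem' _ h1m).1) (sorted_zip_le l hsorted p hp)
    refine (List.sum_le_sum h1).trans ?_
    have : ((l.zip l.tail).map fun p : ℝ × ℝ => (p.2 - p.1) * C).sum
        = ((l.zip l.tail).map fun p : ℝ × ℝ => p.2 - p.1).sum * C := by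
      rw [← List.sum_map_mul_right]
    rw [this, sum_gaps l hsorted r s hrl hsl hmem']
    exact mul_comm (s - r) C ▸ le_refl _
  exact sub_le_sub_right (Real.exp_le_exp.mpr hsum) 1

/-- the bound `‖U_{r,s} - 1‖ ≤ exp(C·(s - r)) - 1`, and the norm
convergence `U_{r,s} → 1` as `s` decreases to `r`. -/
theorem stmt_10 {A : Type*} [NormedRing A] [NormOneClass A] [NormedAlgebra ℂ A]
    [CompleteSpace A]
    (C : ℝ) (hC : 0 < C)
    (a : ℝ → ℝ → A)
    (ha_norm : ∀ r s, 0 ≤ r → r ≤ s → ‖a r s‖ ≤ (s - r) * C)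
    (ha_add : ∀ r s t, 0 ≤ r → r < s → s < t → a r t = a r s + a s t)
    (U : ℝ → ℝ → A)
    (hU : ∀ r s, 0 ≤ r → r < s → IsNetLimit (fun p q => (1 : A) + a p q) r s (U r s)) :
    (∀ r s, 0 ≤ r → r < s → ‖U r s - 1‖ ≤ Real.exp (C * (s - r)) - 1) ∧
      ∀ r, 0 ≤ r →
        Filter.Tendsto (fun s => U r s) (nhdsWithin r (Set.Ioi r)) (nhds 1) := by
  have part1 : ∀ r s, 0 ≤ r → r < s → ‖U r s - 1‖ ≤ Real.exp (C * (s - r)) - 1 := by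
    intro r s hr hrs
    refine le_of_forall_pos_le_add ?_
    intro ε hε
    obtain ⟨γ, hγ, hγ'⟩ := hU r s hr hrs ε hε
    have hnet := hγ' γ hγ (subset_refl γ)
    have hb := partition_bound C a ha_norm r s hr γ hγ
    calc ‖U r s - 1‖ ≤ ‖U r s - partitionProd (fun p q => (1:A) + a p q) γ‖
          + ‖partitionProd (fun p q => (1:A) + a p q) γ - 1‖ := by
          have : U r s - 1 = (U r s - partitionProd (fun p q => (1:A) + a p q) γ)
              + (partitionProd (fun p q => (1:A) + a p q) γ - 1) := by abel
          rw [this]; exact norm_add_le _ _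
      _ ≤ ε + (Real.exp (C * (s - r)) - 1) := by
          rw [norm_sub_rev]
          exact add_le_add hnet.le hb
      _ = Real.exp (C * (s - r)) - 1 + ε := by ring
  refine ⟨part1, ?_⟩
  intro r hr
  rw [Metric.tendsto_nhdsWithin_nhds]
  intro ε hε
  refine ⟨Real.log (1 + ε) / C, div_pos (Real.log_pos (by linarith)) hC, ?_⟩
  intro x hx hd
  rw [Real.dist_eq, abs_of_pos (by simp at hx; linarith [hx])] at hd
  have hxr : r < x := hx
  have hb := part1 r x hr hxr
  rw [dist_eq_norm]
  refine lt_of_le_of_lt hb ?_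
  have h1 : C * (x - r) < Real.log (1 + ε) := by
    have h2 : (x - r) * C < (Real.log (1 + ε) / C) * C := mul_lt_mul_of_pos_right hd hC
    rw [div_mul_cancel₀ _ hC.ne'] at h2
    linarith [h2]
  calc Real.exp (C * (x - r)) - 1 < Real.exp (Real.log (1 + ε)) - 1 := by
        have := Real.exp_lt_exp.mpr h1; linarith
    _ = ε := by rw [Real.exp_log (by linarith)]; ring
end

section
/- Let A be a complete normed unital algebra (Banach algebra) with submultiplicative norm and ‖1‖ = 1, C > 0, and let (a_{r,s})_{0 ≤ r ≤ s} be a family of elements of A such that ‖a_{r,s}‖ ≤ (s − r)·C for all r ≤ s and a_{r,t} = a_{r,s} + a_{s,t} whenever r < s < t. Set g_{r,s} := 1 + a_{r,s} and let U_{r,s} denote the limit of the net of ordered products Θ_α over partitions α of [r,s]. Fix 0 ≤ R < S and, for a partition α = {R = t₁ < … < t_{n+1} = S} of [R,S], define Υ_α := (1 − n)·1 + ∑_{j=1}^{n} U_{t_j,t_{j+1}}. Then the net (Υ_α)_{α ∈ P[R,S]}, indexed by the partitions of [R,S] ordered by inclusion, converges in norm to g_{R,S} = 1 + a_{R,S}.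 -/
private lemma myNormSum {σ : Type*} {A : Type*} [SeminormedAddCommGroup A]
    (l : List σ) (f : σ → A) : ‖(l.map f).sum‖ ≤ (l.map fun x => ‖f x‖).sum := by
  induction l with
  | nil => simp
  | cons x t ih =>
    simp only [List.map_cons, List.sum_cons]
    exact (norm_add_le _ _).trans (by gcongr)

private lemma myMapNormNonneg {A : Type*} [SeminormedAddCommGroup A] (l : List A) :
    0 ≤ (l.map norm).sum :=
  List.sum_nonneg (by simp only [List.mem_map]; rintro x ⟨y, _, rfl⟩; exact norm_nonneg y)

private lemma myProdBound {A : Type*} [NormedRing A] [NormOneClass A] (l : List A) :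
    ‖(l.map fun x => (1 : A) + x).prod - (1 + l.sum)‖ ≤
      Real.exp ((l.map norm).sum) - 1 - (l.map norm).sum := by
  induction l with
  | nil => simp
  | cons x t ih =>
    simp only [List.map_cons, List.sum_cons, List.prod_cons]
    set Q := (t.map fun x => (1 : A) + x).prod with hQ
    set s := t.sum with hs
    set σ := (t.map norm).sum with hσdef
    set c := ‖x‖ with hc
    have hσ0 : 0 ≤ σ := myMapNormNonneg t
    have hc0 : 0 ≤ c := norm_nonneg x
    have hns : ‖s‖ ≤ σ := by
      have := myNormSum t id
      simpa using this
    have key : (1 + x) * Q - (1 + (x + s)) = (1 + x) * (Q - (1 + s)) + x * s := by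
      noncomm_ring
    have h1 : ‖(1 + x) * Q - (1 + (x + s))‖ ≤ (1 + c) * (Real.exp σ - 1 - σ) + c * σ := by
      rw [key]
      refine (norm_add_le _ _).trans ?_
      have e1 : ‖(1 + x) * (Q - (1 + s))‖ ≤ (1 + c) * (Real.exp σ - 1 - σ) := by
        refine (norm_mul_le _ _).trans ?_
        have h1x : ‖(1 : A) + x‖ ≤ 1 + c := (norm_add_le _ _).trans (by simp [hc])
        exact mul_le_mul h1x ih (norm_nonneg _) (by linarith)
      have e2 : ‖x * s‖ ≤ c * σ := (norm_mul_le _ _).trans (by gcongr)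
      linarith
    have hec : 1 + c ≤ Real.exp c := by linarith [Real.add_one_le_exp c]
    have heσ : 1 + σ ≤ Real.exp σ := by linarith [Real.add_one_le_exp σ]
    have hadd : Real.exp (c + σ) = Real.exp c * Real.exp σ := Real.exp_add c σ
    have hpos : 0 < Real.exp σ := Real.exp_pos σ
    nlinarith [mul_le_mul_of_nonneg_right hec hpos.le]

private lemma myFMono {u v : ℝ} (hu : 0 ≤ u) (huv : u ≤ v) :
    Real.exp u - 1 - u ≤ Real.exp v - 1 - v := by
  have h1 : v - u + 1 ≤ Real.exp (v - u) := Real.add_one_le_exp (v - u)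
  have h2 : (1 : ℝ) ≤ Real.exp u := Real.one_le_exp hu
  have h3 : Real.exp v = Real.exp u * Real.exp (v - u) := by
    rw [← Real.exp_add]; ring_nf
  nlinarith [Real.exp_pos u]

private lemma myFQuad {x : ℝ} (hx : 0 ≤ x) :
    Real.exp x - 1 - x ≤ x ^ 2 * Real.exp x := by
  have h1 : 1 - x ≤ Real.exp (-x) := by linarith [Real.add_one_le_exp (-x)]
  have h2 : Real.exp (-x) * Real.exp x = 1 := by
    rw [← Real.exp_add]; simp
  have key : Real.exp x - 1 ≤ x * Real.exp x := by nlinarith [Real.exp_pos x]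
  nlinarith [Real.exp_pos x]

private lemma myTel {B : Type*} [AddCommMonoid B] (b : ℝ → ℝ → B)
    (hb : ∀ r s t, 0 ≤ r → r < s → s < t → b r t = b r s + b s t) :
    ∀ (L : List ℝ) (x : ℝ), 0 ≤ x → List.Chain (· < ·) x L → ∀ hne : L ≠ [],
      (((x :: L).zip L).map fun p => b p.1 p.2).sum = b x (L.getLast hne)
  | [], _, _, _, hne => absurd rfl hne
  | [y], x, _, _, _ => by simp
  | y :: z :: L', x, hx, hc, _ => by
    obtain ⟨hxy, hc⟩ := List.isChain_cons_cons.mp hc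
    have hy : 0 ≤ y := le_of_lt (lt_of_le_of_lt hx hxy)
    have ih := myTel b hb (z :: L') y hy hc (by simp)
    have hlast : y < (z :: L').getLast (by simp) := by
      have hp := List.isChain_iff_pairwise.mp hc
      exact List.rel_of_pairwise_cons hp (List.getLast_mem _)
    have hzip : ((x :: y :: z :: L').zip (y :: z :: L')) =
        (x, y) :: ((y :: z :: L').zip (z :: L')) := rfl
    rw [hzip, List.map_cons, List.sum_cons, ih,
      List.getLast_cons (by simp : (z :: L') ≠ [])]
    exact (hb x y _ hx hxy (by simpa using hlast)).symm

private lemma mySortStruct {R S : ℝ} (hRS : R < S) {α : Finset ℝ} (h : IsPartition R S α) :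
    ∃ L' : List ℝ, α.sort (· ≤ ·) = R :: L' ∧ L' ≠ [] ∧ List.Chain (· < ·) R L' ∧
      ∀ hne : L' ≠ [], L'.getLast hne = S := by
  obtain ⟨hRm, hSm, hmem⟩ := h
  have hsort : (α.sort (· ≤ ·)).Pairwise (· < ·) := List.sortedLT_iff_pairwise.mp (Finset.sortedLT_sort α)
  have hmemL : ∀ t : ℝ, t ∈ α.sort (· ≤ ·) ↔ t ∈ α := fun t => Finset.mem_sort _
  have hRL : R ∈ α.sort (· ≤ ·) := (hmemL R).mpr hRm
  obtain ⟨x, L', hx⟩ := List.exists_cons_of_ne_nil (List.ne_nil_of_mem hRL)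
  rw [hx] at hsort hRL hmemL
  have hxR : x = R := by
    rcases List.mem_cons.mp hRL with h1 | h1
    · exact h1.symm
    · have hxlt : x < R := List.rel_of_pairwise_cons hsort h1
      have : R ≤ x := (hmem x ((hmemL x).mp (List.mem_cons_self (a := x) (l := L')))).1
      linarith
  subst hxR
  have hSL : S ∈ L' := by
    rcases List.mem_cons.mp ((hmemL S).mpr hSm) with h1 | h1
    · exact absurd h1.symm (ne_of_lt hRS)
    · exact h1
  have hne : L' ≠ [] := List.ne_nil_of_mem hSL
  refine ⟨L', hx, hne, List.isChain_iff_pairwise.mpr hsort, fun hne' => ?_⟩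
  have hlastmem : L'.getLast hne' ∈ L' := List.getLast_mem hne'
  have h1 : L'.getLast hne' ≤ S :=
    (hmem _ ((hmemL _).mp (List.mem_cons_of_mem _ hlastmem))).2
  have h2 : S ≤ L'.getLast hne' := by
    have hp : L'.Pairwise (· < ·) := hsort.of_cons
    have hpg := List.pairwise_iff_getElem.mp hp
    obtain ⟨j, hj, hjS⟩ := List.getElem_of_mem hSL
    rw [List.getLast_eq_getElem]
    rcases Nat.lt_or_ge j (L'.length - 1) with hlt | hge
    · have := hpg j (L'.length - 1) hj (by omega) hlt
      rw [hjS] at this; linarith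
    · have hje : j = L'.length - 1 := by omega
      subst hje; exact hjS.ge
  linarith

private lemma myPairMem {α : Finset ℝ} {p : ℝ × ℝ} (hp : p ∈ consecPairs α) :
    p.1 ∈ α ∧ p.2 ∈ α ∧ p.1 < p.2 ∧ ∀ w ∈ α, ¬(p.1 < w ∧ w < p.2) := by
  have hsort : (α.sort (· ≤ ·)).Pairwise (· < ·) := List.sortedLT_iff_pairwise.mp (Finset.sortedLT_sort α)
  have hpair := List.pairwise_iff_getElem.mp hsort
  set L := α.sort (· ≤ ·) with hLdef
  obtain ⟨i, hi, hget⟩ := List.getElem_of_mem hp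
  have hiL : i + 1 < L.length := by
    have := hi
    simp only [consecPairs, List.length_zip, List.length_tail, ← hLdef] at this
    omega
  have hp1 : p.1 = L[i]'(by omega) := by
    rw [← hget]; simp [consecPairs, List.getElem_zip, ← hLdef]
  have hp2 : p.2 = L[i+1]'hiL := by
    rw [← hget]; simp [consecPairs, List.getElem_zip, ← hLdef]
  have hmemL : ∀ t : ℝ, t ∈ L ↔ t ∈ α := fun t => Finset.mem_sort _
  refine ⟨(hmemL _).mp (hp1 ▸ List.getElem_mem _), (hmemL _).mp (hp2 ▸ List.getElem_mem _),
    by rw [hp1, hp2]; exact hpair i (i+1) (by omega) hiL (by omega), ?_⟩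
  rintro w hw ⟨h1, h2⟩
  obtain ⟨j, hj, hjw⟩ := List.getElem_of_mem ((hmemL w).mpr hw)
  rw [hp1] at h1; rw [hp2] at h2
  rcases lt_trichotomy j i with hlt | heq | hgt
  · have := hpair j i hj (by omega) hlt
    rw [hjw] at this; linarith
  · subst heq; rw [hjw] at h1; linarith
  · rcases Nat.lt_or_ge j (i+2) with hj2 | hj2
    · have hji : j = i + 1 := by omega
      subst hji; rw [hjw] at h2; linarith
    · have := hpair (i+1) j hiL hj (by omega)
      rw [hjw] at this; linarith

private lemma mySumMapSub {σ B : Type*} [AddCommGroup B] (l : List σ) (f g : σ → B) :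
    (l.map fun x => f x - g x).sum = (l.map f).sum - (l.map g).sum := by
  induction l with
  | nil => simp
  | cons x t ih => simp only [List.map_cons, List.sum_cons, ih]; abel

private lemma mySumConstAdd {σ B : Type*} [AddCommMonoid B] (l : List σ) (c : B) (g : σ → B) :
    (l.map fun x => c + g x).sum = l.length • c + (l.map g).sum := by
  induction l with
  | nil => simp
  | cons x t ih =>
    simp only [List.map_cons, List.sum_cons, ih, List.length_cons, succ_nsmul]
    abel

private lemma myThetaBound {A : Type*} [NormedRing A] [NormOneClass A]
    (C : ℝ) (a : ℝ → ℝ → A)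
    (ha_norm : ∀ r s, 0 ≤ r → r ≤ s → ‖a r s‖ ≤ (s - r) * C)
    (ha_add : ∀ r s t, 0 ≤ r → r < s → s < t → a r t = a r s + a s t)
    (r s : ℝ) (hr : 0 ≤ r) (hrs : r < s) (α : Finset ℝ) (hα : IsPartition r s α) :
    ‖partitionProd (fun p q => (1 : A) + a p q) α - (1 + a r s)‖ ≤
      Real.exp ((s - r) * C) - 1 - (s - r) * C := by
  obtain ⟨L', hsorteq, hne, hchain, hlast⟩ := mySortStruct hrs hα
  have hcp : consecPairs α = (r :: L').zip L' := by
    unfold consecPairs; rw [hsorteq]; rfl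
  set cp := (r :: L').zip L' with hcpdef
  set l := cp.map (fun p => a p.1 p.2) with hldef
  have hprod : partitionProd (fun p q => (1 : A) + a p q) α = (l.map fun x => 1 + x).prod := by
    rw [partitionProd, hcp, hldef, List.map_map]; rfl
  have hsum : l.sum = a r s := by
    have h := myTel a ha_add L' r hr hchain hne
    rw [hlast hne] at h; exact h
  have hnorms : (l.map norm).sum ≤ (s - r) * C := by
    have hle : (cp.map fun p => ‖a p.1 p.2‖).sum ≤ (cp.map fun p => (p.2 - p.1) * C).sum := by
      apply List.sum_le_sum
      intro p hp
      have hpm := myPairMem (p := p) (hcp ▸ hp)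
      exact ha_norm p.1 p.2 (le_trans hr (hα.2.2 p.1 hpm.1).1) hpm.2.2.1.le
    have htel := myTel (fun u v => (v - u) * C)
      (by intro r' s' t' _ _ _; ring) L' r hr hchain hne
    rw [hlast hne] at htel
    rw [hldef, List.map_map]
    calc ((cp.map (norm ∘ fun p => a p.1 p.2)).sum : ℝ)
        = (cp.map fun p => ‖a p.1 p.2‖).sum := rfl
      _ ≤ (cp.map fun p => (p.2 - p.1) * C).sum := hle
      _ = (s - r) * C := htel
  have h0 : 0 ≤ (l.map norm).sum := myMapNormNonneg l
  calc ‖partitionProd (fun p q => (1 : A) + a p q) α - (1 + a r s)‖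
      = ‖(l.map fun x => 1 + x).prod - (1 + l.sum)‖ := by rw [hprod, hsum]
    _ ≤ Real.exp ((l.map norm).sum) - 1 - (l.map norm).sum := myProdBound l
    _ ≤ Real.exp ((s - r) * C) - 1 - (s - r) * C := myFMono h0 hnorms

private lemma myUBound {A : Type*} [NormedRing A] [NormOneClass A]
    (C : ℝ) (a : ℝ → ℝ → A)
    (ha_norm : ∀ r s, 0 ≤ r → r ≤ s → ‖a r s‖ ≤ (s - r) * C)
    (ha_add : ∀ r s t, 0 ≤ r → r < s → s < t → a r t = a r s + a s t)
    (U : ℝ → ℝ → A)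
    (hU : ∀ r s, 0 ≤ r → r < s → IsNetLimit (fun p q => (1 : A) + a p q) r s (U r s))
    (r s : ℝ) (hr : 0 ≤ r) (hrs : r < s) :
    ‖U r s - (1 + a r s)‖ ≤ Real.exp ((s - r) * C) - 1 - (s - r) * C := by
  by_contra hcon
  push_neg at hcon
  set B := Real.exp ((s - r) * C) - 1 - (s - r) * C with hB
  set ε := ‖U r s - (1 + a r s)‖ - B with hε
  have hε0 : 0 < ε := by rw [hε]; linarith
  obtain ⟨γ, hγ, hprop⟩ := hU r s hr hrs ε hε0
  have h1 := hprop γ hγ (subset_refl γ)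
  have h2 := myThetaBound C a ha_norm ha_add r s hr hrs γ hγ
  set Θ := partitionProd (fun p q => (1 : A) + a p q) γ with hΘ
  have hid : U r s - (1 + a r s) = (Θ - (1 + a r s)) - (Θ - U r s) := by abel
  have := (hid ▸ norm_sub_le (Θ - (1 + a r s)) (Θ - U r s))
  rw [hε] at h1
  linarith

/-- for a partition `α = {R = t₁ < … < t_{n+1} = S}`, the net
`Υ_α := (1 - n)·1 + ∑_{j=1}^{n} U_{t_j,t_{j+1}}` over partitions of `[R, S]` ordered
by inclusion converges in norm to `g_{R,S} = 1 + a_{R,S}`. -/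
theorem stmt_12 {A : Type*} [NormedRing A] [NormOneClass A] [NormedAlgebra ℂ A]
    [CompleteSpace A]
    (C : ℝ) (hC : 0 < C)
    (a : ℝ → ℝ → A)
    (ha_norm : ∀ r s, 0 ≤ r → r ≤ s → ‖a r s‖ ≤ (s - r) * C)
    (ha_add : ∀ r s t, 0 ≤ r → r < s → s < t → a r t = a r s + a s t)
    (U : ℝ → ℝ → A)
    (hU : ∀ r s, 0 ≤ r → r < s → IsNetLimit (fun p q => (1 : A) + a p q) r s (U r s))
    (R S : ℝ) (hR : 0 ≤ R) (hRS : R < S) :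
    ∀ ε > 0, ∃ γ : Finset ℝ, IsPartition R S γ ∧
      ∀ α : Finset ℝ, IsPartition R S α → γ ⊆ α →
        ‖((1 - ((α.card : ℤ) - 1)) • (1 : A) + partitionSum U α) - (1 + a R S)‖ < ε := by
  intro ε hε
  have hSR : 0 < S - R := by linarith
  obtain ⟨K, hK⟩ : ∃ K : ℝ, K = Real.exp ((S - R) * C) := ⟨_, rfl⟩
  have hK0 : 0 < K := hK ▸ Real.exp_pos _
  obtain ⟨δ, hδdef⟩ : ∃ δ : ℝ, δ = ε / (2 * C ^ 2 * K * (S - R)) := ⟨_, rfl⟩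
  have hδ : 0 < δ := by rw [hδdef]; positivity
  obtain ⟨n, hndef⟩ : ∃ n : ℕ, n = ⌈(S - R) / δ⌉₊ + 1 := ⟨_, rfl⟩
  have hn0 : 0 < n := by omega
  obtain ⟨d, hddef⟩ : ∃ d : ℝ, d = (S - R) / n := ⟨_, rfl⟩
  have hnR : (0 : ℝ) < n := by exact_mod_cast hn0
  have hd0 : 0 < d := by rw [hddef]; positivity
  have hdδ : d ≤ δ := by
    rw [hddef, div_le_iff₀ hnR]
    have h1 : (S - R) / δ ≤ (n : ℝ) := by
      rw [hndef]
      refine le_trans (Nat.le_ceil _) ?_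
      exact_mod_cast Nat.le_succ _
    calc S - R = ((S - R) / δ) * δ := by field_simp
      _ ≤ (n : ℝ) * δ := mul_le_mul_of_nonneg_right h1 hδ.le
      _ = δ * n := mul_comm _ _
  have hSn : R + (n : ℝ) * d = S := by
    rw [hddef]
    field_simp
    ring
  obtain ⟨γ, hγdef⟩ : ∃ γ : Finset ℝ,
      γ = (Finset.range (n + 1)).image (fun i : ℕ => R + (i : ℝ) * d) := ⟨_, rfl⟩
  have hγ : IsPartition R S γ := by
    rw [hγdef]
    refine ⟨?_, ?_, ?_⟩
    · exact Finset.mem_image.mpr ⟨0, Finset.mem_range.mpr (by omega), by simp⟩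
    · exact Finset.mem_image.mpr ⟨n, Finset.mem_range.mpr (by omega), hSn⟩
    · intro t ht
      obtain ⟨i, hi, rfl⟩ := Finset.mem_image.mp ht
      have hin : (i : ℝ) ≤ (n : ℝ) := by
        exact_mod_cast Nat.lt_succ_iff.mp (Finset.mem_range.mp hi)
      have hi0 : (0 : ℝ) ≤ (i : ℝ) := Nat.cast_nonneg i
      constructor
      · nlinarith
      · nlinarith
  refine ⟨γ, hγ, ?_⟩
  intro α hα hsub
  have hmesh : ∀ p ∈ consecPairs α, p.2 - p.1 ≤ d := by
    intro p hp
    by_contra hcon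
    push_neg at hcon
    obtain ⟨hp1, hp2, hplt, hnob⟩ := myPairMem hp
    have hu : R ≤ p.1 := (hα.2.2 _ hp1).1
    have hv : p.2 ≤ S := (hα.2.2 _ hp2).2
    obtain ⟨k, hk⟩ : ∃ k : ℕ, k = ⌊(p.1 - R) / d⌋₊ := ⟨_, rfl⟩
    have hk1 : (p.1 - R) / d < (k : ℝ) + 1 := hk ▸ Nat.lt_floor_add_one _
    have hk2 : (k : ℝ) ≤ (p.1 - R) / d := hk ▸ Nat.floor_le (div_nonneg (by linarith) hd0.le)
    have hk1' : p.1 - R < ((k : ℝ) + 1) * d := (div_lt_iff₀ hd0).mp hk1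
    have hk2' : (k : ℝ) * d ≤ p.1 - R := (le_div_iff₀ hd0).mp hk2
    have hw1 : p.1 < R + ((k : ℝ) + 1) * d := by linarith
    have hw2 : R + ((k : ℝ) + 1) * d < p.2 := by linarith
    have hkn : k + 1 < n + 1 := by
      have hmul : ((k : ℝ) + 1) * d < (n : ℝ) * d := by linarith
      have h2 : (k : ℝ) + 1 < (n : ℝ) := lt_of_mul_lt_mul_right hmul hd0.le
      have h3 : k + 1 < n := by exact_mod_cast h2
      omega
    have hwγ : R + ((k : ℝ) + 1) * d ∈ γ := by
      rw [hγdef]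
      exact Finset.mem_image.mpr ⟨k + 1, Finset.mem_range.mpr hkn, by push_cast; ring⟩
    exact hnob _ (hsub hwγ) ⟨hw1, hw2⟩
  obtain ⟨L', hsorteq, hne, hchain, hlast⟩ := mySortStruct hRS hα
  have hcp : consecPairs α = (R :: L').zip L' := by
    unfold consecPairs; rw [hsorteq]; rfl
  have hcard : α.card = L'.length + 1 := by
    have h := Finset.length_sort (α := ℝ) (· ≤ ·) (s := α)
    rw [hsorteq] at h
    simpa using h.symm
  have hcplen : ((R :: L').zip L').length = L'.length := by
    simp [List.length_zip]
  have haRS : (((R :: L').zip L').map fun p => a p.1 p.2).sum = a R S := by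
    have h := myTel a ha_add L' R hR hchain hne
    rw [hlast hne] at h; exact h
  have hps : partitionSum U α = (((R :: L').zip L').map fun p => U p.1 p.2).sum := by
    rw [partitionSum, hcp]
  have hkey : ((1 - ((α.card : ℤ) - 1)) • (1 : A) + partitionSum U α) - (1 + a R S)
      = (((R :: L').zip L').map fun p => U p.1 p.2 - ((1 : A) + a p.1 p.2)).sum := by
    rw [mySumMapSub ((R :: L').zip L') (fun p => U p.1 p.2) (fun p => (1 : A) + a p.1 p.2),
      mySumConstAdd ((R :: L').zip L') (1 : A) (fun p => a p.1 p.2), haRS, hcplen, hps, hcard]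
    push_cast
    simp only [sub_smul, one_smul, add_smul, natCast_zsmul, neg_smul]
    abel
  rw [hkey]
  have hbound : ∀ p ∈ (R :: L').zip L',
      ‖U p.1 p.2 - ((1 : A) + a p.1 p.2)‖ ≤ C ^ 2 * K * d * (p.2 - p.1) := by
    intro p hp
    have hpcα : p ∈ consecPairs α := hcp ▸ hp
    have hpm := myPairMem hpcα
    have h0p : 0 ≤ p.1 := le_trans hR (hα.2.2 _ hpm.1).1
    have hΔ0 : 0 ≤ p.2 - p.1 := le_of_lt (by linarith [hpm.2.2.1])
    have hΔd : p.2 - p.1 ≤ d := hmesh p hpcα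
    have hΔSR : p.2 - p.1 ≤ S - R := by
      have h1 := (hα.2.2 _ hpm.1).1
      have h2 := (hα.2.2 _ hpm.2.1).2
      linarith
    have hub := myUBound C a ha_norm ha_add U hU p.1 p.2 h0p hpm.2.2.1
    have hexp : Real.exp ((p.2 - p.1) * C) ≤ K := by
      rw [hK]
      exact Real.exp_le_exp.mpr (by nlinarith)
    have hexp0 : 0 < Real.exp ((p.2 - p.1) * C) := Real.exp_pos _
    calc ‖U p.1 p.2 - ((1 : A) + a p.1 p.2)‖
        ≤ Real.exp ((p.2 - p.1) * C) - 1 - (p.2 - p.1) * C := hub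
      _ ≤ ((p.2 - p.1) * C) ^ 2 * Real.exp ((p.2 - p.1) * C) := myFQuad (by positivity)
      _ ≤ ((p.2 - p.1) * C) ^ 2 * K := by
          exact mul_le_mul_of_nonneg_left hexp (by positivity)
      _ = C ^ 2 * K * (p.2 - p.1) ^ 2 := by ring
      _ ≤ C ^ 2 * K * (d * (p.2 - p.1)) := by
          have hdd : (p.2 - p.1) ^ 2 ≤ d * (p.2 - p.1) := by nlinarith
          exact mul_le_mul_of_nonneg_left hdd (by positivity)
      _ = C ^ 2 * K * d * (p.2 - p.1) := by ring
  have hsumtel : (((R :: L').zip L').map fun p => C ^ 2 * K * d * (p.2 - p.1)).sum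
      = C ^ 2 * K * d * (S - R) := by
    have h := myTel (fun u v => C ^ 2 * K * d * (v - u))
      (by intro r' s' t' _ _ _; ring) L' R hR hchain hne
    rw [hlast hne] at h; exact h
  have hfin : ‖(((R :: L').zip L').map fun p => U p.1 p.2 - ((1 : A) + a p.1 p.2)).sum‖
      ≤ C ^ 2 * K * d * (S - R) := by
    rw [← hsumtel]
    exact (myNormSum _ _).trans (List.sum_le_sum hbound)
  have hhalf : C ^ 2 * K * d * (S - R) ≤ ε / 2 := by
    have h1 : C ^ 2 * K * d * (S - R) ≤ C ^ 2 * K * δ * (S - R) := by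
      have := mul_le_mul_of_nonneg_right (mul_le_mul_of_nonneg_left hdδ (by positivity : (0:ℝ) ≤ C ^ 2 * K)) hSR.le
      calc C ^ 2 * K * d * (S - R) = (C ^ 2 * K * d) * (S - R) := by ring
        _ ≤ (C ^ 2 * K * δ) * (S - R) := this
        _ = C ^ 2 * K * δ * (S - R) := by ring
    have h2 : C ^ 2 * K * δ * (S - R) = ε / 2 := by
      rw [hδdef]; field_simp
    linarith
  linarith
end

section
/- Let A be a complete normed unital algebra (Banach algebra) with submultiplicative norm and ‖1‖ = 1, C > 0, and let (a_{r,s})_{0 ≤ r ≤ s} be a family of elements of A such that ‖a_{r,s}‖ ≤ (s − r)·C for all r ≤ s and a_{r,t} = a_{r,s} + a_{s,t} whenever r < s < t. Set g_{r,s} := 1 + a_{r,s} and let U_{r,s} denote the limit of the net of ordered products Θ_α over partitions α of [r,s]. Fix 0 ≤ R < S. Then for every partition α = {R = t₁ < … < t_{n+1} = S} of [R,S] one has ‖(1 − n)·1 + ∑_{j=1}^{n} U_{t_j,t_{j+1}} − g_{R,S}‖ ≤ (1/2)·‖α‖·(S − R)·C²·exp(C·(S − R)), where ‖α‖ := max_j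 (t_{j+1} − t_j) is the mesh of α. -/
set_option linter.unusedSectionVars false
set_option maxHeartbeats 1000000

open Nat

/-! ### Auxiliary lemmas -/

lemma exp_quad {T : ℝ} (hT : 0 ≤ T) :
    Real.exp T - 1 - T ≤ T ^ 2 / 2 * Real.exp T := by
  have hsum := Real.summable_pow_div_factorial T
  have h1 : Real.exp T = ∑' n : ℕ, T ^ n / n ! := by
    rw [Real.exp_eq_exp_ℝ, NormedSpace.exp_eq_tsum_div]
  have h2 := Summable.sum_add_tsum_nat_add (f := fun n : ℕ => T ^ n / n !) 2 hsum
  have h3 : (∑ i ∈ Finset.range 2, T ^ i / (i)!) = 1 + T := by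
    simp [Finset.sum_range_succ]
  have key : Real.exp T - 1 - T = ∑' n : ℕ, T ^ (n + 2) / (n + 2)! := by
    rw [h1, ← h2, h3]; ring
  rw [key]
  have hb : ∀ n : ℕ, T ^ (n + 2) / ((n + 2)! : ℝ) ≤ T ^ 2 / 2 * (T ^ n / n !) := by
    intro n
    have hfac : (2 : ℝ) * n ! ≤ ((n + 2)! : ℝ) := by
      have : (n + 2)! = (n + 2) * ((n + 1) * n !) := by
        rw [Nat.factorial_succ, Nat.factorial_succ]
      rw [this]
      push_cast
      have h1 : (0:ℝ) ≤ (n : ℝ) := Nat.cast_nonneg n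
      have h2 : (0:ℝ) < (n ! : ℝ) := Nat.cast_pos.2 (Nat.factorial_pos n)
      nlinarith [mul_nonneg h1 h2.le, mul_nonneg (mul_nonneg h1 h1) h2.le]
    have hnum : T ^ (n + 2) = T ^ 2 * T ^ n := by ring
    rw [hnum, _root_.div_mul_div_comm]
    apply div_le_div_of_nonneg_left (by positivity) (by positivity) hfac
  calc (∑' n : ℕ, T ^ (n + 2) / ((n + 2)! : ℝ))
      ≤ ∑' n : ℕ, T ^ 2 / 2 * (T ^ n / n !) := by
        apply Summable.tsum_le_tsum hb ((summable_nat_add_iff 2).2 hsum) (hsum.mul_left _)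
    _ = T ^ 2 / 2 * Real.exp T := by rw [tsum_mul_left, ← h1]

section ListAux
variable {A : Type*} [NormedRing A] [NormOneClass A] {ι : Type*}

lemma my_le_foldr_max {l : List ℝ} {x : ℝ} (hx : x ∈ l) : x ≤ l.foldr max 0 := by
  induction l with
  | nil => simp at hx
  | cons y t ih =>
    rcases List.mem_cons.1 hx with h | h
    · subst h; exact le_max_left _ _
    · exact (ih h).trans (le_max_right _ _)

lemma my_foldr_max_nonneg (l : List ℝ) : 0 ≤ l.foldr max 0 := by
  induction l with
  | nil => simp
  | cons y t ih => exact ih.trans (le_max_right _ _)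

lemma my_norm_list_sum_le (l : List A) : ‖l.sum‖ ≤ (l.map norm).sum := by
  induction l with
  | nil => simp
  | cons x t ih =>
    simp only [List.sum_cons, List.map_cons]
    exact (norm_add_le _ _).trans (by linarith)

lemma zip_tail_mem : ∀ (l : List ℝ), l.Pairwise (· < ·) →
    ∀ p ∈ l.zip l.tail, p.1 ∈ l ∧ p.2 ∈ l ∧ p.1 < p.2 := by
  intro l
  induction l with
  | nil => intro _ p hp; simp at hp
  | cons x t ih =>
    intro hs p hp
    cases t with
    | nil => simp at hp
    | cons y t' =>
      simp only [List.tail_cons, List.zip_cons_cons, List.mem_cons] at hp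
      rcases hp with rfl | hp
      · exact ⟨List.mem_cons_self, List.mem_cons_of_mem _ (List.mem_cons_self),
          (List.pairwise_cons.1 hs).1 _ (List.mem_cons_self)⟩
      · have := ih (List.pairwise_cons.1 hs).2 p (by simpa using hp)
        exact ⟨List.mem_cons_of_mem _ this.1, List.mem_cons_of_mem _ this.2.1, this.2.2⟩

lemma telescope {M : Type*} [AddCommMonoid M] (f : ℝ → ℝ → M)
    (hf : ∀ r s t : ℝ, 0 ≤ r → r < s → s < t → f r t = f r s + f s t) :
    ∀ (l : List ℝ) (x : ℝ), (x :: l).Pairwise (· < ·) → 0 ≤ x → ∀ (hne : l ≠ []),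
      (((x :: l).zip l).map (fun p => f p.1 p.2)).sum = f x (l.getLast hne) := by
  intro l
  induction l with
  | nil => intro x _ _ hne; exact absurd rfl hne
  | cons y t ih =>
    intro x hs hx hne
    cases t with
    | nil => simp
    | cons z t' =>
      have hxy : x < y := (List.pairwise_cons.1 hs).1 _ (List.mem_cons_self)
      have hs' : (y :: z :: t').Pairwise (· < ·) := (List.pairwise_cons.1 hs).2
      have h2 := ih y hs' (hx.trans hxy.le) (by simp)
      simp only [List.zip_cons_cons, List.map_cons, List.sum_cons] at h2 ⊢
      rw [h2]
      have hylast : y < (z :: t').getLast (by simp) :=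
        (List.pairwise_cons.1 hs').1 _ (List.getLast_mem _)
      rw [List.getLast_cons (by simp : (z :: t') ≠ [])]
      exact (hf x y _ hx hxy hylast).symm

variable (b : ι → A) (w : ι → ℝ)

lemma one_le_prodW : ∀ (l : List ι), (∀ i ∈ l, 0 ≤ w i) →
    1 ≤ (l.map fun i => 1 + w i).prod := by
  intro l
  induction l with
  | nil => simp
  | cons i t ih =>
    intro h
    simp only [List.map_cons, List.prod_cons]
    have h1 : 0 ≤ w i := h i (List.mem_cons_self)
    have h2 := ih fun j hj => h j (List.mem_cons_of_mem _ hj)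
    nlinarith

lemma norm_prodA_le : ∀ (l : List ι), (∀ i ∈ l, ‖b i‖ ≤ w i ∧ 0 ≤ w i) →
    ‖(l.map fun i => 1 + b i).prod‖ ≤ (l.map fun i => 1 + w i).prod := by
  intro l
  induction l with
  | nil => simp
  | cons i t ih =>
    intro h
    simp only [List.map_cons, List.prod_cons]
    have h1 := h i (List.mem_cons_self)
    have h2 := ih fun j hj => h j (List.mem_cons_of_mem _ hj)
    calc ‖(1 + b i) * (t.map fun i => 1 + b i).prod‖
        ≤ ‖1 + b i‖ * ‖(t.map fun i => 1 + b i).prod‖ := norm_mul_le _ _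
      _ ≤ (1 + w i) * (t.map fun i => 1 + w i).prod := by
          apply mul_le_mul _ h2 (norm_nonneg _) (by linarith [h1.2])
          calc ‖(1:A) + b i‖ ≤ ‖(1:A)‖ + ‖b i‖ := norm_add_le _ _
            _ ≤ 1 + w i := by rw [norm_one]; linarith [h1.1]

lemma norm_prodA_sub_one_le : ∀ (l : List ι), (∀ i ∈ l, ‖b i‖ ≤ w i ∧ 0 ≤ w i) →
    ‖(l.map fun i => 1 + b i).prod - 1‖ ≤ (l.map fun i => 1 + w i).prod - 1 := by
  intro l
  induction l with
  | nil => simp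
  | cons i t ih =>
    intro h
    simp only [List.map_cons, List.prod_cons]
    have h1 := h i (List.mem_cons_self)
    have h2 := ih fun j hj => h j (List.mem_cons_of_mem _ hj)
    have h3 := norm_prodA_le b w t fun j hj => h j (List.mem_cons_of_mem _ hj)
    set P := (t.map fun i => 1 + b i).prod with hP
    set Q := (t.map fun i => 1 + w i).prod with hQ
    have key : (1 + b i) * P - 1 = (P - 1) + b i * P := by noncomm_ring
    rw [key]
    calc ‖(P - 1) + b i * P‖ ≤ ‖P - 1‖ + ‖b i * P‖ := norm_add_le _ _
      _ ≤ (Q - 1) + w i * Q := by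
          have := (norm_mul_le (b i) P).trans
            (mul_le_mul h1.1 h3 (norm_nonneg _) h1.2)
          linarith
      _ = (1 + w i) * Q - 1 := by ring

lemma norm_prodA_sub_one_sub_sum_le : ∀ (l : List ι), (∀ i ∈ l, ‖b i‖ ≤ w i ∧ 0 ≤ w i) →
    ‖(l.map fun i => 1 + b i).prod - 1 - (l.map b).sum‖ ≤
      (l.map fun i => 1 + w i).prod - 1 - (l.map w).sum := by
  intro l
  induction l with
  | nil => simp
  | cons i t ih =>
    intro h
    simp only [List.map_cons, List.prod_cons, List.sum_cons]
    have h1 := h i (List.mem_cons_self)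
    have h2 := ih fun j hj => h j (List.mem_cons_of_mem _ hj)
    have h3 := norm_prodA_sub_one_le b w t fun j hj => h j (List.mem_cons_of_mem _ hj)
    set P := (t.map fun i => 1 + b i).prod with hP
    set Q := (t.map fun i => 1 + w i).prod with hQ
    have key : (1 + b i) * P - 1 - (b i + (t.map b).sum) =
        (P - 1 - (t.map b).sum) + b i * (P - 1) := by noncomm_ring
    rw [key]
    calc ‖(P - 1 - (t.map b).sum) + b i * (P - 1)‖
        ≤ ‖P - 1 - (t.map b).sum‖ + ‖b i * (P - 1)‖ := norm_add_le _ _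
      _ ≤ (Q - 1 - (t.map w).sum) + w i * (Q - 1) := by
          have := (norm_mul_le (b i) (P - 1)).trans
            (mul_le_mul h1.1 h3 (norm_nonneg _) h1.2)
          linarith
      _ = (1 + w i) * Q - 1 - (w i + (t.map w).sum) := by ring

lemma prodW_le_exp : ∀ (l : List ι), (∀ i ∈ l, 0 ≤ w i) →
    (l.map fun i => 1 + w i).prod ≤ Real.exp ((l.map w).sum) := by
  intro l
  induction l with
  | nil => simp
  | cons i t ih =>
    intro h
    simp only [List.map_cons, List.prod_cons, List.sum_cons, Real.exp_add]
    have h1 : 0 ≤ w i := h i (List.mem_cons_self)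
    have h2 := ih fun j hj => h j (List.mem_cons_of_mem _ hj)
    have h4 : (1:ℝ) ≤ (t.map fun i => 1 + w i).prod :=
      one_le_prodW w t fun j hj => h j (List.mem_cons_of_mem _ hj)
    calc (1 + w i) * (t.map fun i => 1 + w i).prod
        = (w i + 1) * (t.map fun i => 1 + w i).prod := by ring
      _ ≤ Real.exp (w i) * Real.exp ((t.map w).sum) :=
          mul_le_mul (Real.add_one_le_exp (w i)) h2 (by linarith) (Real.exp_nonneg _)

lemma rearrange (u c : ι → A) : ∀ (l : List ι),
    (l.map (fun i => u i - 1 - c i)).sum =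
      (l.map u).sum - (l.length : ℤ) • (1 : A) - (l.map c).sum := by
  intro l
  induction l with
  | nil => simp
  | cons i t ih =>
    simp only [List.map_cons, List.sum_cons, List.length_cons, ih]
    push_cast
    rw [add_smul, one_smul]
    abel

end ListAux

lemma partition_struct (r s : ℝ) (hrs : r < s) (β : Finset ℝ) (hβ : IsPartition r s β) :
    ∃ (x : ℝ) (l : List ℝ) (hne : l ≠ []),
      β.sort (· ≤ ·) = x :: l ∧ x = r ∧ l.getLast hne = s := by
  have hcard : 1 < β.card := Finset.one_lt_card.2 ⟨r, hβ.1, s, hβ.2.1, hrs.ne⟩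
  have hlen : (β.sort (· ≤ ·)).length = β.card := Finset.length_sort _
  have hne : β.Nonempty := Finset.card_pos.1 (by omega)
  have hmin : β.min' hne = r :=
    le_antisymm (Finset.min'_le _ _ hβ.1)
      (Finset.le_min' _ _ _ fun y hy => (hβ.2.2 y hy).1)
  have hmax : β.max' hne = s :=
    le_antisymm (Finset.max'_le _ _ _ fun y hy => (hβ.2.2 y hy).2)
      (Finset.le_max' _ _ hβ.2.1)
  cases hL : β.sort (· ≤ ·) with
  | nil => rw [hL] at hlen; simp at hlen; omega
  | cons x l =>
    have hlne : l ≠ [] := by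
      intro h; rw [hL, h] at hlen; simp at hlen; omega
    refine ⟨x, l, hlne, rfl, ?_, ?_⟩
    · have h0 : (β.sort (· ≤ ·))[0]'(by rw [hlen]; omega) = β.min' hne :=
        Finset.sorted_zero_eq_min'_aux _ _ _
      simp only [hL] at h0
      simpa using h0.trans hmin
    · have h1 : (β.sort (· ≤ ·))[(β.sort (· ≤ ·)).length - 1]'
          (by rw [hlen]; omega) = β.max' hne :=
        Finset.sorted_last_eq_max'_aux _ (by rw [hlen]; omega) _
      have h2 : (β.sort (· ≤ ·)).getLast (by rw [hL]; simp) = β.max' hne := by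
        rw [List.getLast_eq_getElem]; exact h1
      rw [hmax] at h2
      rw [← h2]
      simp only [hL]
      exact (List.getLast_cons hlne).symm

lemma prod_bound {A : Type*} [NormedRing A] [NormOneClass A]
    (C : ℝ) (hC : 0 ≤ C) (a : ℝ → ℝ → A)
    (ha_norm : ∀ r s, 0 ≤ r → r ≤ s → ‖a r s‖ ≤ (s - r) * C)
    (ha_add : ∀ r s t, 0 ≤ r → r < s → s < t → a r t = a r s + a s t)
    (r s : ℝ) (hr : 0 ≤ r) (hrs : r < s) (β : Finset ℝ) (hβ : IsPartition r s β) :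
    ‖partitionProd (fun p q => (1 : A) + a p q) β - (1 + a r s)‖ ≤
      Real.exp (C * (s - r)) - 1 - C * (s - r) := by
  obtain ⟨x, l, hlne, hL, hx, hlast⟩ := partition_struct r s hrs β hβ
  have hsorted : (β.sort (· ≤ ·)).Pairwise (· < ·) := (Finset.sortedLT_sort β).pairwise
  rw [hL] at hsorted
  set P := (x :: l).zip l with hPdef
  have hmem : ∀ p ∈ P, p.1 ∈ x :: l ∧ p.2 ∈ x :: l ∧ p.1 < p.2 := by
    intro p hp
    exact zip_tail_mem (x :: l) hsorted p (by simpa using hp)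
  have hin : ∀ y ∈ x :: l, r ≤ y ∧ y ≤ s := by
    intro y hy
    apply hβ.2.2
    rw [← Finset.mem_sort (α := ℝ) (· ≤ ·), hL]; exact hy
  have hCP : consecPairs β = P := by rw [consecPairs, hL]; rfl
  have hw : ∀ p ∈ P, ‖a p.1 p.2‖ ≤ (p.2 - p.1) * C ∧ 0 ≤ (p.2 - p.1) * C := by
    intro p hp
    obtain ⟨h1, h2, h3⟩ := hmem p hp
    have hr1 : 0 ≤ p.1 := hr.trans (hin _ h1).1
    exact ⟨ha_norm _ _ hr1 h3.le, mul_nonneg (by linarith) hC⟩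
  have tele_a : (P.map (fun p => a p.1 p.2)).sum = a r s := by
    have := telescope a ha_add l x hsorted (hx ▸ hr) hlne
    rw [hPdef, this, hx, hlast]
  have tele_w : (P.map (fun p => (p.2 - p.1) * C)).sum = (s - r) * C := by
    have := telescope (fun u v => (v - u) * C) (fun r s t _ _ _ => by ring) l x hsorted
      (hx ▸ hr) hlne
    rw [hPdef, this, hx, hlast]
  have hkey := norm_prodA_sub_one_sub_sum_le (fun p : ℝ × ℝ => a p.1 p.2)
    (fun p : ℝ × ℝ => (p.2 - p.1) * C) P hw
  rw [tele_a, tele_w] at hkey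
  have hexp := prodW_le_exp (fun p : ℝ × ℝ => (p.2 - p.1) * C) P (fun p hp => (hw p hp).2)
  rw [tele_w] at hexp
  have hrw : partitionProd (fun p q => (1 : A) + a p q) β - (1 + a r s)
      = (P.map fun p => 1 + a p.1 p.2).prod - 1 - a r s := by
    rw [partitionProd, hCP, sub_add_eq_sub_sub]
  rw [hrw]
  have hcomm : (s - r) * C = C * (s - r) := mul_comm _ _
  calc ‖(P.map fun p => 1 + a p.1 p.2).prod - 1 - a r s‖
      ≤ (P.map fun p : ℝ × ℝ => 1 + (p.2 - p.1) * C).prod - 1 - (s - r) * C := hkey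
    _ ≤ Real.exp (C * (s - r)) - 1 - C * (s - r) := by rw [← hcomm]; linarith

lemma U_bound {A : Type*} [NormedRing A] [NormOneClass A]
    (C : ℝ) (hC : 0 ≤ C) (a : ℝ → ℝ → A)
    (ha_norm : ∀ r s, 0 ≤ r → r ≤ s → ‖a r s‖ ≤ (s - r) * C)
    (ha_add : ∀ r s t, 0 ≤ r → r < s → s < t → a r t = a r s + a s t)
    (U : ℝ → ℝ → A)
    (hU : ∀ r s, 0 ≤ r → r < s → IsNetLimit (fun p q => (1 : A) + a p q) r s (U r s))
    (r s : ℝ) (hr : 0 ≤ r) (hrs : r < s) :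
    ‖U r s - (1 + a r s)‖ ≤ (C * (s - r)) ^ 2 / 2 * Real.exp (C * (s - r)) := by
  have hstep : ‖U r s - (1 + a r s)‖ ≤ Real.exp (C * (s - r)) - 1 - C * (s - r) := by
    refine le_of_not_gt fun hlt => ?_
    set ε := ‖U r s - (1 + a r s)‖ - (Real.exp (C * (s - r)) - 1 - C * (s - r)) with hε
    have hεpos : 0 < ε := by simp only [hε]; linarith
    obtain ⟨γ, hγ, hconv⟩ := hU r s hr hrs ε hεpos
    have h1 := hconv γ hγ (subset_refl γ)
    have h2 := prod_bound C hC a ha_norm ha_add r s hr hrs γ hγ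
    have h3 : U r s - (1 + a r s) =
        (U r s - partitionProd (fun p q => (1 : A) + a p q) γ) +
          (partitionProd (fun p q => (1 : A) + a p q) γ - (1 + a r s)) := by abel
    have h4 := norm_add_le (U r s - partitionProd (fun p q => (1 : A) + a p q) γ)
      (partitionProd (fun p q => (1 : A) + a p q) γ - (1 + a r s))
    rw [← h3] at h4
    have h5 : ‖U r s - partitionProd (fun p q => (1 : A) + a p q) γ‖ =
        ‖partitionProd (fun p q => (1 : A) + a p q) γ - U r s‖ := norm_sub_rev _ _
    rw [hε] at *
    linarith
  exact hstep.trans (exp_quad (mul_nonneg hC (by linarith)))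

/-- mesh estimate for the difference between
`(1 - n)·1 + ∑_{j=1}^{n} U_{t_j,t_{j+1}}` and `g_{R,S}` for a partition
`α = {R = t₁ < … < t_{n+1} = S}` of `[R, S]`. -/
theorem stmt_13 {A : Type*} [NormedRing A] [NormOneClass A] [NormedAlgebra ℂ A]
    [CompleteSpace A]
    (C : ℝ) (hC : 0 < C)
    (a : ℝ → ℝ → A)
    (ha_norm : ∀ r s, 0 ≤ r → r ≤ s → ‖a r s‖ ≤ (s - r) * C)
    (ha_add : ∀ r s t, 0 ≤ r → r < s → s < t → a r t = a r s + a s t)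
    (U : ℝ → ℝ → A)
    (hU : ∀ r s, 0 ≤ r → r < s → IsNetLimit (fun p q => (1 : A) + a p q) r s (U r s))
    (R S : ℝ) (hR : 0 ≤ R) (hRS : R < S) :
    ∀ α : Finset ℝ, IsPartition R S α →
      ‖((1 - ((α.card : ℤ) - 1)) • (1 : A) + partitionSum U α) - (1 + a R S)‖ ≤
        (1 / 2) * mesh α * (S - R) * C ^ 2 * Real.exp (C * (S - R)) := by
  intro α hα
  obtain ⟨x, l, hlne, hL, hx, hlast⟩ := partition_struct R S hRS α hα
  have hsorted : (α.sort (· ≤ ·)).Pairwise (· < ·) := (Finset.sortedLT_sort α).pairwise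
  rw [hL] at hsorted
  set P := (x :: l).zip l with hPdef
  have hCP : consecPairs α = P := by rw [consecPairs, hL]; rfl
  have hmem : ∀ p ∈ P, p.1 ∈ x :: l ∧ p.2 ∈ x :: l ∧ p.1 < p.2 := by
    intro p hp
    exact zip_tail_mem (x :: l) hsorted p (by simpa using hp)
  have hin : ∀ y ∈ x :: l, R ≤ y ∧ y ≤ S := by
    intro y hy
    apply hα.2.2
    rw [← Finset.mem_sort (α := ℝ) (· ≤ ·), hL]; exact hy
  -- card and length
  have hlen : (α.sort (· ≤ ·)).length = α.card := Finset.length_sort _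
  have hPlen : P.length = l.length := by
    rw [hPdef, List.length_zip]; simp
  have hcard : (α.card : ℤ) = (P.length : ℤ) + 1 := by
    rw [← hlen, hL]; simp [hPlen]
  -- telescoping
  have tele_a : (P.map (fun p => a p.1 p.2)).sum = a R S := by
    have := telescope a ha_add l x hsorted (hx ▸ hR) hlne
    rw [hPdef, this, hx, hlast]
  have tele_d : (P.map (fun p : ℝ × ℝ => p.2 - p.1)).sum = S - R := by
    have := telescope (fun u v => v - u) (fun r s t _ _ _ => by ring) l x hsorted
      (hx ▸ hR) hlne
    rw [hPdef, this, hx, hlast]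
  -- rewrite the LHS as a single list sum
  have hrear : ((1 - ((α.card : ℤ) - 1)) • (1 : A) + partitionSum U α) - (1 + a R S)
      = (P.map (fun p => U p.1 p.2 - 1 - a p.1 p.2)).sum := by
    rw [rearrange (fun p : ℝ × ℝ => U p.1 p.2) (fun p : ℝ × ℝ => a p.1 p.2) P,
      partitionSum, hCP, ← tele_a, hcard]
    have : (1 - ((P.length : ℤ) + 1 - 1)) • (1 : A) = (1:A) - (P.length : ℤ) • (1:A) := by
      rw [sub_smul, one_smul]; ring_nf
    rw [this]
    abel
  rw [hrear]
  -- termwise bound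
  set K := 1 / 2 * C ^ 2 * Real.exp (C * (S - R)) * mesh α with hK
  have hterm : ∀ p ∈ P, ‖U p.1 p.2 - 1 - a p.1 p.2‖ ≤ K * (p.2 - p.1) := by
    intro p hp
    obtain ⟨h1, h2, h3⟩ := hmem p hp
    have hRp : R ≤ p.1 := (hin _ h1).1
    have hpS : p.2 ≤ S := (hin _ h2).2
    have h0p : 0 ≤ p.1 := hR.trans hRp
    have hdel : p.2 - p.1 ≤ mesh α := by
      apply my_le_foldr_max
      rw [hCP]
      exact List.mem_map_of_mem hp
    have hdSR : p.2 - p.1 ≤ S - R := by linarith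
    have hub := U_bound C hC.le a ha_norm ha_add U hU p.1 p.2 h0p h3
    rw [sub_sub]
    refine hub.trans ?_
    have hd0 : 0 ≤ p.2 - p.1 := by linarith
    have hmesh0 : 0 ≤ mesh α := by rw [mesh]; exact my_foldr_max_nonneg _
    have hXY : (p.2 - p.1) * Real.exp (C * (p.2 - p.1)) ≤
        mesh α * Real.exp (C * (S - R)) :=
      mul_le_mul hdel (Real.exp_le_exp.2 (by nlinarith [hC.le])) (Real.exp_nonneg _) hmesh0
    calc (C * (p.2 - p.1)) ^ 2 / 2 * Real.exp (C * (p.2 - p.1))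
        = 1 / 2 * C ^ 2 * (p.2 - p.1) * ((p.2 - p.1) * Real.exp (C * (p.2 - p.1))) := by
          ring
      _ ≤ 1 / 2 * C ^ 2 * (p.2 - p.1) * (mesh α * Real.exp (C * (S - R))) :=
          mul_le_mul_of_nonneg_left hXY
            (mul_nonneg (by positivity : (0:ℝ) ≤ 1 / 2 * C ^ 2) hd0)
      _ = K * (p.2 - p.1) := by rw [hK]; ring
  -- sum up
  calc ‖(P.map (fun p => U p.1 p.2 - 1 - a p.1 p.2)).sum‖
      ≤ ((P.map (fun p => U p.1 p.2 - 1 - a p.1 p.2)).map norm).sum :=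
        my_norm_list_sum_le _
    _ = (P.map (fun p => ‖U p.1 p.2 - 1 - a p.1 p.2‖)).sum := by rw [List.map_map]; rfl
    _ ≤ (P.map (fun p : ℝ × ℝ => K * (p.2 - p.1))).sum := List.sum_le_sum hterm
    _ = K * (S - R) := by
        rw [← tele_d, ← List.sum_map_mul_left]
    _ = (1 / 2) * mesh α * (S - R) * C ^ 2 * Real.exp (C * (S - R)) := by rw [hK]; ring
end
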